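/- arXiv:1507.00832 — 6 statements merged into one kernel-verified Lean document; each statement's English description precedes it below -/
import Mathlib

section
/- Let Ω ⊂ ℝ be a compact interval, K : Ω×Ω → (0,∞) a continuous symmetric kernel with ∫_Ω K(μ,x) dx = 1 for every μ ∈ Ω, and g₀ : Ω → (0,∞) a continuous probability density; set f₀(x) = ∫_Ω K(μ,x) g₀(μ) dμ and P_{g₀}(μ₁,μ₂) = ∫_Ω √(g₀(μ₁)) K(μ₁,x) f₀(x)^{-1} K(x,μ₂) √(g₀(μ₂)) dx. Then for every square-integrable h : Ω → ℝ, 0 ≤ ∫_Ω ∫_Ω h(μ₁) P_{g₀}(μ₁,μ₂) h(μ₂) dμ₁ dμ₂ ≤ ∫_Ω h(μ)² dμ; in particular all eigenvalues of the integral operator with kernel P_{g₀} lie in [0,1]. -/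
open MeasureTheory


private lemma exists_cont_ext {X : Type*} [TopologicalSpace X] [NormalSpace X] {s : Set X}
    (hs : IsClosed s) {f : X → ℝ} (hf : ContinuousOn f s) :
    ∃ F : X → ℝ, Continuous F ∧ ∀ x ∈ s, F x = f x := by
  obtain ⟨g, hg⟩ := ContinuousMap.exists_restrict_eq (Y := ℝ) hs ⟨s.restrict f, hf.restrict⟩
  refine ⟨g, g.continuous, fun x hx => ?_⟩
  have := congrFun (congrArg DFunLike.coe hg) ⟨x, hx⟩
  exact this

private lemma integrable_mul_bdd {α : Type*} {m : MeasurableSpace α} {μ : Measure α}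
    {f B : α → ℝ} (hf : Integrable f μ) (hB : AEStronglyMeasurable B μ) {C : ℝ}
    (hC : ∀ᵐ x ∂μ, |B x| ≤ C) : Integrable (fun x => f x * B x) μ := by
  refine Integrable.mono' (hf.norm.mul_const C) (hf.aestronglyMeasurable.mul hB) ?_
  filter_upwards [hC] with x hx
  rw [norm_mul]
  exact mul_le_mul_of_nonneg_left (le_trans (le_of_eq (Real.norm_eq_abs _)) hx) (norm_nonneg _)

private lemma integrable_fst_mul_bdd {μ ν : Measure ℝ} [SFinite ν] [IsFiniteMeasure ν]
    {h : ℝ → ℝ} {B : ℝ × ℝ → ℝ} (hh : Integrable h μ)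
    (hB : AEStronglyMeasurable B (μ.prod ν)) {C : ℝ}
    (hC : ∀ᵐ p ∂(μ.prod ν), |B p| ≤ C) :
    Integrable (fun p : ℝ × ℝ => h p.1 * B p) (μ.prod ν) := by
  refine Integrable.mono' (hh.norm.mul_prod (integrable_const C))
    (hh.aestronglyMeasurable.comp_fst.mul hB) ?_
  filter_upwards [hC] with p hp
  rw [norm_mul]
  exact mul_le_mul_of_nonneg_left (le_trans (le_of_eq (Real.norm_eq_abs _)) hp) (norm_nonneg _)

/-- Part of the proof of Theorem 1: the deconvolution operator with kernel
`P_{g₀}(μ₁,μ₂) = ∫_Ω √(g₀(μ₁)) K(μ₁,x) f₀(x)⁻¹ K(x,μ₂) √(g₀(μ₂)) dx` is positive with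
operator norm at most one: for every square-integrable `h` on `Ω = [a,b]`,
`0 ≤ ∬ h(μ₁) P_{g₀}(μ₁,μ₂) h(μ₂) dμ₁ dμ₂ ≤ ∫ h(μ)² dμ`. In particular all its
eigenvalues lie in `[0,1]`. -/
theorem stmt_5 (a b : ℝ) (hab : a < b)
    (K : ℝ → ℝ → ℝ) (g₀ : ℝ → ℝ)
    (hK : ContinuousOn (fun q : ℝ × ℝ => K q.1 q.2) (Set.Icc a b ×ˢ Set.Icc a b))
    (hKpos : ∀ μ ∈ Set.Icc a b, ∀ x ∈ Set.Icc a b, 0 < K μ x)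
    (hKsymm : ∀ μ x, K μ x = K x μ)
    (hKint : ∀ μ ∈ Set.Icc a b, ∫ x in Set.Icc a b, K μ x = 1)
    (hg₀ : ContinuousOn g₀ (Set.Icc a b))
    (hg₀pos : ∀ μ ∈ Set.Icc a b, 0 < g₀ μ)
    (hg₀int : ∫ μ in Set.Icc a b, g₀ μ = 1)
    (f₀ : ℝ → ℝ)
    (hf₀ : ∀ x, f₀ x = ∫ μ in Set.Icc a b, K μ x * g₀ μ)
    (P : ℝ → ℝ → ℝ)
    (hP : ∀ μ₁ μ₂, P μ₁ μ₂ =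
      ∫ x in Set.Icc a b,
        Real.sqrt (g₀ μ₁) * K μ₁ x * (f₀ x)⁻¹ * K x μ₂ * Real.sqrt (g₀ μ₂)) :
    ∀ h : ℝ → ℝ, MemLp h 2 (volume.restrict (Set.Icc a b)) →
      0 ≤ (∫ μ₁ in Set.Icc a b, ∫ μ₂ in Set.Icc a b, h μ₁ * P μ₁ μ₂ * h μ₂) ∧
      (∫ μ₁ in Set.Icc a b, ∫ μ₂ in Set.Icc a b, h μ₁ * P μ₁ μ₂ * h μ₂)
        ≤ ∫ μ in Set.Icc a b, h μ ^ 2 := by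
  intro h hh
  have hSne : (Set.Icc a b).Nonempty := Set.nonempty_Icc.2 hab.le
  have hSc : IsCompact (Set.Icc a b) := isCompact_Icc
  have hSm : MeasurableSet (Set.Icc a b) := measurableSet_Icc
  set ν : Measure ℝ := volume.restrict (Set.Icc a b) with hν
  haveI : IsFiniteMeasure ν := ⟨by rw [hν, Measure.restrict_apply_univ]; exact measure_Icc_lt_top⟩
  -- continuous extensions of K and g₀
  obtain ⟨Kc, hKcc, hKce⟩ := exists_cont_ext (isClosed_Icc.prod isClosed_Icc) hK
  obtain ⟨gc, hgcc, hgce⟩ := exists_cont_ext isClosed_Icc hg₀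
  have hKce' : ∀ μ x : ℝ, μ ∈ Set.Icc a b → x ∈ Set.Icc a b → K μ x = Kc (μ, x) :=
    fun μ x hμ hx => (hKce (μ, x) ⟨hμ, hx⟩).symm
  -- bounds
  obtain ⟨p₀, hp₀S, hp₀⟩ := (hSc.prod hSc).exists_isMinOn (hSne.prod hSne) hKcc.continuousOn
  set cK : ℝ := Kc p₀ with hcKdef
  have hcKpos : 0 < cK := by
    rw [hcKdef, hKce p₀ hp₀S]; exact hKpos _ hp₀S.1 _ hp₀S.2
  have hcKle : ∀ p ∈ Set.Icc a b ×ˢ Set.Icc a b, cK ≤ Kc p := fun p hp => hp₀ hp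
  obtain ⟨CK, hCK⟩ := (hSc.prod hSc).exists_bound_of_continuousOn hKcc.continuousOn
  have hCK' : ∀ p ∈ Set.Icc a b ×ˢ Set.Icc a b, |Kc p| ≤ CK := by
    intro p hp; rw [← Real.norm_eq_abs]; exact hCK p hp
  have hCK0 : 0 ≤ CK := le_trans (norm_nonneg _) (hCK p₀ hp₀S)
  set q : ℝ → ℝ := fun μ => Real.sqrt (gc μ) with hq
  have hqc : Continuous q := Real.continuous_sqrt.comp hgcc
  have hq0 : ∀ μ, 0 ≤ q μ := fun μ => Real.sqrt_nonneg _
  obtain ⟨Cq, hCq⟩ := hSc.exists_bound_of_continuousOn hqc.continuousOn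
  have hCq' : ∀ μ ∈ Set.Icc a b, |q μ| ≤ Cq := by
    intro μ hμ; rw [← Real.norm_eq_abs]; exact hCq μ hμ
  have hCq0 : 0 ≤ Cq := le_trans (norm_nonneg _) (hCq a (Set.left_mem_Icc.2 hab.le))
  -- h facts
  have hmh : AEStronglyMeasurable h ν := hh.1
  have hih : Integrable h ν := hh.integrable one_le_two
  have hih2 : Integrable (fun μ => h μ ^ 2) ν := hh.integrable_sq
  -- gc facts
  have hgc_pos : ∀ μ ∈ Set.Icc a b, 0 < gc μ := fun μ hμ => (hgce μ hμ) ▸ hg₀pos μ hμ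
  have hq_sq : ∀ μ ∈ Set.Icc a b, q μ ^ 2 = gc μ := fun μ hμ => Real.sq_sqrt (hgc_pos μ hμ).le
  -- f'
  set f' : ℝ → ℝ := fun x => ∫ μ in Set.Icc a b, Kc (μ, x) * gc μ with hf'def
  have hf'm : StronglyMeasurable f' := by
    apply MeasureTheory.StronglyMeasurable.integral_prod_right'
      (f := fun p : ℝ × ℝ => Kc (p.2, p.1) * gc p.2) (ν := ν)
    exact ((hKcc.comp (continuous_snd.prodMk continuous_fst)).mul
      (hgcc.comp continuous_snd)).stronglyMeasurable
  have hint_f' : ∀ x : ℝ, Integrable (fun μ => Kc (μ, x) * gc μ) ν := fun x =>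
    ((hKcc.comp (continuous_id.prodMk continuous_const)).mul hgcc).integrableOn_Icc
  have hgc_int : ∫ μ in Set.Icc a b, gc μ = 1 := by
    rw [← hg₀int]; exact setIntegral_congr_fun hSm fun μ hμ => hgce μ hμ
  have hf'_lb : ∀ x ∈ Set.Icc a b, cK ≤ f' x := by
    intro x hx
    have h1 : cK = ∫ μ in Set.Icc a b, cK * gc μ := by
      rw [integral_const_mul, hgc_int, mul_one]
    rw [h1]
    refine setIntegral_mono_on (continuous_const.mul hgcc).integrableOn_Icc (hint_f' x) hSm ?_
    intro μ hμ
    exact mul_le_mul_of_nonneg_right (hcKle (μ, x) ⟨hμ, hx⟩) (hgc_pos μ hμ).le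
  have hf'_pos : ∀ x ∈ Set.Icc a b, 0 < f' x := fun x hx => lt_of_lt_of_le hcKpos (hf'_lb x hx)
  have hf₀_eq : ∀ x ∈ Set.Icc a b, f₀ x = f' x := by
    intro x hx
    rw [hf₀ x]
    exact setIntegral_congr_fun hSm fun μ hμ => by
      simp only [hKce' μ x hμ hx, hgce μ hμ]
  -- W and T
  set W : ℝ × ℝ → ℝ := fun p => h p.1 * (q p.1 * Kc p) with hWdef
  set T : ℝ → ℝ := fun x => ∫ μ in Set.Icc a b, h μ * (q μ * Kc (μ, x)) with hTdef
  have hWm : AEStronglyMeasurable W (ν.prod ν) :=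
    (hmh.comp_fst (ν := ν)).mul ((hqc.comp continuous_fst).mul hKcc).aestronglyMeasurable
  have hTm : AEStronglyMeasurable T ν := by
    apply MeasureTheory.AEStronglyMeasurable.integral_prod_right'
      (f := fun p : ℝ × ℝ => h p.2 * (q p.2 * Kc (p.2, p.1))) (ν := ν)
    exact hmh.comp_snd.mul ((hqc.comp continuous_snd).mul
      (hKcc.comp (continuous_snd.prodMk continuous_fst))).aestronglyMeasurable
  have hWint : ∀ x ∈ Set.Icc a b, Integrable (fun μ => h μ * (q μ * Kc (μ, x))) ν := by
    intro x hx
    refine integrable_mul_bdd hih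
      ((hqc.mul (hKcc.comp (continuous_id.prodMk continuous_const))).aestronglyMeasurable)
      (C := Cq * CK) ?_
    filter_upwards [ae_restrict_mem hSm] with μ hμ
    rw [abs_mul]
    exact mul_le_mul (hCq' μ hμ) (hCK' (μ, x) ⟨hμ, hx⟩) (abs_nonneg _) hCq0
  set CT : ℝ := Cq * CK * ∫ μ in Set.Icc a b, |h μ| with hCTdef
  have hCT0 : 0 ≤ CT := by
    apply mul_nonneg (mul_nonneg hCq0 hCK0)
    exact setIntegral_nonneg hSm fun μ _ => abs_nonneg _
  have hTb : ∀ x ∈ Set.Icc a b, |T x| ≤ CT := by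
    intro x hx
    have h1 : |T x| ≤ ∫ μ in Set.Icc a b, ‖h μ * (q μ * Kc (μ, x))‖ := by
      rw [← Real.norm_eq_abs]; exact norm_integral_le_integral_norm _
    refine h1.trans ?_
    have h2 : (∫ μ in Set.Icc a b, ‖h μ * (q μ * Kc (μ, x))‖)
        ≤ ∫ μ in Set.Icc a b, |h μ| * (Cq * CK) := by
      refine setIntegral_mono_on (hWint x hx).norm (hih.abs.mul_const _) hSm ?_
      intro μ hμ
      rw [Real.norm_eq_abs, abs_mul, abs_mul]
      exact mul_le_mul_of_nonneg_left
        (mul_le_mul (hCq' μ hμ) (hCK' (μ, x) ⟨hμ, hx⟩) (abs_nonneg _) hCq0) (abs_nonneg _)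
    refine h2.trans ?_
    rw [integral_mul_const, hCTdef]
    ring_nf
    exact le_refl _
  -- Step A: rewrite the double integral with extended kernels
  have stepA : (∫ μ₁ in Set.Icc a b, ∫ μ₂ in Set.Icc a b, h μ₁ * P μ₁ μ₂ * h μ₂)
      = ∫ μ₁ in Set.Icc a b, ∫ μ₂ in Set.Icc a b, ∫ x in Set.Icc a b,
          W (μ₁, x) * (f' x)⁻¹ * W (μ₂, x) := by
    refine setIntegral_congr_fun hSm fun μ₁ hμ₁ => ?_
    refine setIntegral_congr_fun hSm fun μ₂ hμ₂ => ?_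
    rw [hP, ← integral_const_mul, ← integral_mul_const]
    refine setIntegral_congr_fun hSm fun x hx => ?_
    simp only [hWdef, hq]
    rw [hKsymm x μ₂, hKce' μ₁ x hμ₁ hx, hKce' μ₂ x hμ₂ hx, hgce μ₁ hμ₁, hgce μ₂ hμ₂,
      hf₀_eq x hx]
    ring
  -- a.e. membership in the product
  have haeprod : ∀ᵐ p ∂(ν.prod ν), p ∈ Set.Icc a b ×ˢ Set.Icc a b := by
    rw [hν, Measure.prod_restrict]
    exact ae_restrict_mem (hSm.prod hSm)
  have hinv_b : ∀ x ∈ Set.Icc a b, |(f' x)⁻¹| ≤ cK⁻¹ := by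
    intro x hx
    rw [abs_of_pos (inv_pos.2 (hf'_pos x hx))]
    exact inv_anti₀ hcKpos (hf'_lb x hx)
  -- Step B : swap μ₂ and x
  have hB2 : ∀ μ₁ ∈ Set.Icc a b, Integrable
      (Function.uncurry fun μ₂ x => W (μ₁, x) * (f' x)⁻¹ * W (μ₂, x)) (ν.prod ν) := by
    intro μ₁ hμ₁
    have hint : Integrable (fun p : ℝ × ℝ =>
        h p.1 * (q p.1 * Kc p * (h μ₁ * (q μ₁ * Kc (μ₁, p.2)) * (f' p.2)⁻¹))) (ν.prod ν) := by
      refine integrable_fst_mul_bdd hih ?_ (C := Cq * CK * (|h μ₁| * |q μ₁| * CK * cK⁻¹)) ?_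
      · refine (((hqc.comp continuous_fst).mul hKcc).aestronglyMeasurable).mul ?_
        refine AEStronglyMeasurable.mul ?_ ?_
        · exact (continuous_const.mul (continuous_const.mul
            (hKcc.comp (continuous_const.prodMk continuous_snd)))).aestronglyMeasurable
        · exact ((hf'm.measurable.comp measurable_snd).inv).aestronglyMeasurable
      · filter_upwards [haeprod] with p hp
        have h1 : |q p.1 * Kc p * (h μ₁ * (q μ₁ * Kc (μ₁, p.2)) * (f' p.2)⁻¹)|
            = |q p.1| * |Kc p| * (|h μ₁| * |q μ₁| * |Kc (μ₁, p.2)| * |(f' p.2)⁻¹|) := by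
          simp only [abs_mul]; ring
        rw [h1]
        gcongr (?_ * ?_) * ((_ * _) * ?_ * ?_)
        · exact hCq' p.1 hp.1
        · exact hCK' p hp
        · exact hCK' (μ₁, p.2) ⟨hμ₁, hp.2⟩
        · exact hinv_b p.2 hp.2
    refine hint.congr ?_
    filter_upwards with p
    simp only [Function.uncurry, hWdef]
    ring
  have stepB : ∀ μ₁ ∈ Set.Icc a b,
      (∫ μ₂ in Set.Icc a b, ∫ x in Set.Icc a b, W (μ₁, x) * (f' x)⁻¹ * W (μ₂, x))
      = ∫ x in Set.Icc a b, W (μ₁, x) * (f' x)⁻¹ * T x := by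
    intro μ₁ hμ₁
    rw [integral_integral_swap (hB2 μ₁ hμ₁)]
    refine setIntegral_congr_fun hSm fun x hx => ?_
    rw [integral_const_mul]
  -- Step C : swap μ₁ and x
  have hB3 : Integrable
      (Function.uncurry fun μ₁ x => W (μ₁, x) * (f' x)⁻¹ * T x) (ν.prod ν) := by
    have hint : Integrable (fun p : ℝ × ℝ =>
        h p.1 * (q p.1 * Kc p * ((f' p.2)⁻¹ * T p.2))) (ν.prod ν) := by
      refine integrable_fst_mul_bdd hih ?_ (C := Cq * CK * (cK⁻¹ * CT)) ?_
      · refine (((hqc.comp continuous_fst).mul hKcc).aestronglyMeasurable).mul ?_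
        exact (((hf'm.measurable.comp measurable_snd).inv).aestronglyMeasurable).mul hTm.comp_snd
      · filter_upwards [haeprod] with p hp
        have h1 : |q p.1 * Kc p * ((f' p.2)⁻¹ * T p.2)|
            = |q p.1| * |Kc p| * (|(f' p.2)⁻¹| * |T p.2|) := by
          simp only [abs_mul]
        rw [h1]
        gcongr (?_ * ?_) * (?_ * ?_)
        · exact hCq' p.1 hp.1
        · exact hCK' p hp
        · exact hinv_b p.2 hp.2
        · exact hTb p.2 hp.2
    refine hint.congr ?_
    filter_upwards with p
    simp only [Function.uncurry, hWdef]
    ring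
  have key : (∫ μ₁ in Set.Icc a b, ∫ μ₂ in Set.Icc a b, h μ₁ * P μ₁ μ₂ * h μ₂)
      = ∫ x in Set.Icc a b, (f' x)⁻¹ * T x ^ 2 := by
    rw [stepA, setIntegral_congr_fun hSm stepB, integral_integral_swap hB3]
    refine setIntegral_congr_fun hSm fun x hx => ?_
    rw [integral_mul_const, integral_mul_const]
    have hTx : (∫ μ₁ in Set.Icc a b, W (μ₁, x)) = T x := by
      simp only [hWdef, hTdef]
    rw [hTx]
    ring
  -- nonnegativity of Kc on the square
  have hKc0 : ∀ μ ∈ Set.Icc a b, ∀ x ∈ Set.Icc a b, 0 ≤ Kc (μ, x) :=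
    fun μ hμ x hx => (lt_of_lt_of_le hcKpos (hcKle (μ, x) ⟨hμ, hx⟩)).le
  have hint3 : ∀ x ∈ Set.Icc a b, Integrable (fun μ => h μ ^ 2 * Kc (μ, x)) ν := by
    intro x hx
    refine integrable_mul_bdd hih2
      ((hKcc.comp (continuous_id.prodMk continuous_const)).aestronglyMeasurable) (C := CK) ?_
    filter_upwards [ae_restrict_mem hSm] with μ hμ
    exact hCK' (μ, x) ⟨hμ, hx⟩
  -- pointwise Cauchy–Schwarz bound
  have hCS : ∀ x ∈ Set.Icc a b,
      (f' x)⁻¹ * T x ^ 2 ≤ ∫ μ in Set.Icc a b, h μ ^ 2 * Kc (μ, x) := by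
    intro x hx
    set A : ℝ := ∫ μ in Set.Icc a b, h μ ^ 2 * Kc (μ, x) with hAdef
    have hA0 : 0 ≤ A :=
      setIntegral_nonneg hSm fun μ hμ => mul_nonneg (sq_nonneg _) (hKc0 μ hμ x hx)
    set F : ℝ → ℝ := fun μ => ‖h μ‖ * Real.sqrt (Kc (μ, x)) with hFdef
    set G : ℝ → ℝ := fun μ => q μ * Real.sqrt (Kc (μ, x)) with hGdef
    have hsqrtKc : Continuous fun μ => Real.sqrt (Kc (μ, x)) :=
      Real.continuous_sqrt.comp (hKcc.comp (continuous_id.prodMk continuous_const))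
    have hFmeas : AEStronglyMeasurable F ν := hmh.norm.mul hsqrtKc.aestronglyMeasurable
    have hF2 : ∀ μ ∈ Set.Icc a b, F μ ^ 2 = h μ ^ 2 * Kc (μ, x) := by
      intro μ hμ
      simp only [hFdef]
      rw [mul_pow, Real.sq_sqrt (hKc0 μ hμ x hx), Real.norm_eq_abs, sq_abs]
    have hFint2 : Integrable (fun μ => F μ ^ 2) ν := by
      refine (hint3 x hx).congr ?_
      filter_upwards [ae_restrict_mem hSm] with μ hμ
      exact (hF2 μ hμ).symm
    have hFmem : MemLp F 2 ν := (memLp_two_iff_integrable_sq hFmeas).2 hFint2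
    have hGc : Continuous G := hqc.mul hsqrtKc
    have hG2 : ∀ μ ∈ Set.Icc a b, G μ ^ 2 = Kc (μ, x) * gc μ := by
      intro μ hμ
      simp only [hGdef]
      rw [mul_pow, hq_sq μ hμ, Real.sq_sqrt (hKc0 μ hμ x hx), mul_comm]
    have hGmem : MemLp G 2 ν :=
      (memLp_two_iff_integrable_sq hGc.aestronglyMeasurable).2 (hGc.pow 2).integrableOn_Icc
    have hconj : Real.HolderConjugate 2 2 := Real.HolderConjugate.two_two
    have h2cast : ENNReal.ofReal (2 : ℝ) = 2 := by norm_num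
    have hHold := integral_mul_le_Lp_mul_Lq_of_nonneg (μ := ν) hconj
      (Filter.Eventually.of_forall fun μ => mul_nonneg (norm_nonneg _) (Real.sqrt_nonneg _))
      (Filter.Eventually.of_forall fun μ => mul_nonneg (hq0 μ) (Real.sqrt_nonneg _))
      (h2cast ▸ hFmem) (h2cast ▸ hGmem)
    have hpow : ∀ y : ℝ, y ^ (2 : ℝ) = y ^ 2 := fun y => by
      rw [show (2 : ℝ) = ((2 : ℕ) : ℝ) by norm_num, Real.rpow_natCast]
    try simp only [hpow] at hHold
    have hArw : (∫ μ in Set.Icc a b, F μ ^ 2) = A := by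
      rw [hAdef]; exact setIntegral_congr_fun hSm hF2
    have hGrw : (∫ μ in Set.Icc a b, G μ ^ 2) = f' x := by
      rw [setIntegral_congr_fun hSm hG2]
    rw [hArw, hGrw] at hHold
    have hTA : |T x| ≤ A ^ (1 / 2 : ℝ) * (f' x) ^ (1 / 2 : ℝ) := by
      have h1 : |T x| ≤ ∫ μ in Set.Icc a b, ‖h μ * (q μ * Kc (μ, x))‖ := by
        rw [← Real.norm_eq_abs]; exact norm_integral_le_integral_norm _
      refine h1.trans (le_trans (le_of_eq ?_) hHold)
      refine setIntegral_congr_fun hSm fun μ hμ => ?_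
      have hk0 := hKc0 μ hμ x hx
      try simp only [hFdef, hGdef]
      rw [norm_mul, norm_mul, Real.norm_eq_abs (Kc (μ, x)), abs_of_nonneg hk0,
        Real.norm_eq_abs (q μ), abs_of_nonneg (hq0 μ)]
      linear_combination (-(‖h μ‖ * q μ)) * Real.mul_self_sqrt hk0
    have hsqr : ∀ y : ℝ, 0 ≤ y → (y ^ (1 / 2 : ℝ)) ^ 2 = y := fun y hy => by
      rw [← Real.rpow_natCast (y ^ (1 / 2 : ℝ)) 2, ← Real.rpow_mul hy]
      norm_num
    have h5 : T x ^ 2 ≤ A * f' x := by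
      have h6 := pow_le_pow_left₀ (abs_nonneg (T x)) hTA 2
      rw [sq_abs] at h6
      calc T x ^ 2 ≤ (A ^ (1 / 2 : ℝ) * (f' x) ^ (1 / 2 : ℝ)) ^ 2 := h6
        _ = A * f' x := by rw [mul_pow, hsqr A hA0, hsqr (f' x) (hf'_pos x hx).le]
    calc (f' x)⁻¹ * T x ^ 2 ≤ (f' x)⁻¹ * (A * f' x) :=
        mul_le_mul_of_nonneg_left h5 (inv_nonneg.2 (hf'_pos x hx).le)
      _ = A := by rw [mul_comm A (f' x), ← mul_assoc, inv_mul_cancel₀ (hf'_pos x hx).ne', one_mul]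
  -- integrability of both sides of the monotone comparison
  have int1 : Integrable (fun x => (f' x)⁻¹ * T x ^ 2) ν := by
    refine Integrable.mono' (integrable_const (cK⁻¹ * CT ^ 2)) ?_ ?_
    · exact (hf'm.measurable.inv.aestronglyMeasurable).mul
        ((hTm.aemeasurable.pow_const 2).aestronglyMeasurable)
    · filter_upwards [ae_restrict_mem hSm] with x hx
      rw [Real.norm_eq_abs, abs_mul, abs_pow]
      exact mul_le_mul (hinv_b x hx) (pow_le_pow_left₀ (abs_nonneg _) (hTb x hx) 2)
        (pow_nonneg (abs_nonneg _) 2) (inv_pos.2 hcKpos).le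
  have int2 : Integrable (fun x => ∫ μ in Set.Icc a b, h μ ^ 2 * Kc (μ, x)) ν := by
    refine Integrable.mono' (integrable_const ((∫ μ in Set.Icc a b, h μ ^ 2) * CK)) ?_ ?_
    · apply MeasureTheory.AEStronglyMeasurable.integral_prod_right'
        (f := fun p : ℝ × ℝ => h p.2 ^ 2 * Kc (p.2, p.1)) (ν := ν)
      exact (hih2.aestronglyMeasurable.comp_snd).mul
        (hKcc.comp (continuous_snd.prodMk continuous_fst)).aestronglyMeasurable
    · filter_upwards [ae_restrict_mem hSm] with x hx
      rw [Real.norm_eq_abs]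
      have h1 : |∫ μ in Set.Icc a b, h μ ^ 2 * Kc (μ, x)|
          ≤ ∫ μ in Set.Icc a b, |h μ ^ 2 * Kc (μ, x)| := by
        rw [← Real.norm_eq_abs]
        refine (norm_integral_le_integral_norm _).trans (le_of_eq ?_)
        refine setIntegral_congr_fun hSm fun μ hμ => Real.norm_eq_abs _
      refine h1.trans ?_
      have h2 : (∫ μ in Set.Icc a b, |h μ ^ 2 * Kc (μ, x)|)
          ≤ ∫ μ in Set.Icc a b, h μ ^ 2 * CK := by
        refine setIntegral_mono_on (hint3 x hx).abs (hih2.mul_const _) hSm fun μ hμ => ?_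
        rw [abs_mul, abs_of_nonneg (sq_nonneg (h μ))]
        exact mul_le_mul_of_nonneg_left (hCK' (μ, x) ⟨hμ, hx⟩) (sq_nonneg _)
      refine h2.trans (le_of_eq ?_)
      rw [integral_mul_const]
  -- Fubini for the upper bound
  have hswap2 : Integrable
      (Function.uncurry fun x μ => h μ ^ 2 * Kc (μ, x)) (ν.prod ν) := by
    have hG : Integrable (fun p : ℝ × ℝ => (fun μ => h μ ^ 2) p.1 * Kc p) (ν.prod ν) := by
      refine integrable_fst_mul_bdd hih2 hKcc.aestronglyMeasurable (C := CK) ?_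
      filter_upwards [haeprod] with p hp
      exact hCK' p hp
    refine (hG.swap).congr ?_
    filter_upwards with p
    rfl
  refine ⟨?_, ?_⟩
  · rw [key]
    exact setIntegral_nonneg hSm fun x hx =>
      mul_nonneg (inv_pos.2 (hf'_pos x hx)).le (sq_nonneg _)
  · rw [key]
    calc (∫ x in Set.Icc a b, (f' x)⁻¹ * T x ^ 2)
        ≤ ∫ x in Set.Icc a b, ∫ μ in Set.Icc a b, h μ ^ 2 * Kc (μ, x) :=
          setIntegral_mono_on int1 int2 hSm hCS
      _ = ∫ μ in Set.Icc a b, ∫ x in Set.Icc a b, h μ ^ 2 * Kc (μ, x) :=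
          integral_integral_swap hswap2
      _ = ∫ μ in Set.Icc a b, h μ ^ 2 := by
          refine setIntegral_congr_fun hSm fun μ hμ => ?_
          rw [integral_const_mul]
          have hone : (∫ x in Set.Icc a b, Kc (μ, x)) = 1 := by
            rw [← hKint μ hμ]
            exact setIntegral_congr_fun hSm fun x hx => (hKce' μ x hμ hx).symm
          rw [hone, mul_one]
end

section
/- Let Ω ⊂ ℝ be a compact interval, K : Ω×Ω → (0,∞) a continuous symmetric kernel with ∫_Ω K(μ,x) dx = 1 for every μ ∈ Ω, and g₀ : Ω → (0,∞) a continuous probability density; set f₀(x) = ∫_Ω K(μ,x) g₀(μ) dμ and P_{g₀}(μ₁,μ₂) = ∫_Ω √(g₀(μ₁)) K(μ₁,x) f₀(x)^{-1} K(x,μ₂) √(g₀(μ₂)) dx. Suppose ζ₂, …, ζ_{p+1} are orthonormal functions in L²(Ω), each orthogonal to √g₀, with ∫_Ω P_{g₀}(μ₁,μ₂) ζ_i(μ₂) dμ₂ = λ_i ζ_i(μ₁) for 2 ≤ i ≤ p+1. Define T_j(μ) = ζ_{j+1}(μ)/√(g₀(μ)) for 1 ≤ j ≤ p. Then ∫_Ω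 T_j(μ) g₀(μ) dμ = 0, ∫_Ω T_j(μ) T_k(μ) g₀(μ) dμ = δ_{jk}, and the matrix M(T) with entries M(T)_{jk} = ∫_Ω (∫_Ω T_j(μ) K(μ,x) g₀(μ) dμ)(∫_Ω T_k(μ) K(μ,x) g₀(μ) dμ) f₀(x)^{-1} dx is diagonal with M(T)_{jk} = δ_{jk} λ_{j+1}. -/
open MeasureTheory Matrix

section AuxStmt7

variable {a b : ℝ}

private lemma aux_fin (a b : ℝ) : IsFiniteMeasure (volume.restrict (Set.Icc a b)) :=
  ⟨by rw [Measure.restrict_apply_univ]; exact measure_Icc_lt_top⟩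

/-- integrability on the product of a weight (in the second variable) times a
continuous kernel. -/
private lemma aux_int_snd {φ : ℝ → ℝ} {C : ℝ × ℝ → ℝ}
    (hφ : IntegrableOn φ (Set.Icc a b))
    (hC : ContinuousOn C (Set.Icc a b ×ˢ Set.Icc a b)) :
    Integrable (fun z : ℝ × ℝ => φ z.2 * C z)
      ((volume.restrict (Set.Icc a b)).prod (volume.restrict (Set.Icc a b))) := by
  haveI := aux_fin a b
  have hSm : MeasurableSet (Set.Icc a b) := measurableSet_Icc
  have hprod : (volume.restrict (Set.Icc a b)).prod (volume.restrict (Set.Icc a b))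
      = (volume.prod volume).restrict (Set.Icc a b ×ˢ Set.Icc a b) :=
    Measure.prod_restrict _ _
  have hCm : AEStronglyMeasurable C
      ((volume.restrict (Set.Icc a b)).prod (volume.restrict (Set.Icc a b))) := by
    rw [hprod]; exact hC.aestronglyMeasurable (hSm.prod hSm)
  obtain ⟨B, hB⟩ := (isCompact_Icc.prod isCompact_Icc).exists_bound_of_continuousOn hC
  have hbound : Integrable (fun z : ℝ × ℝ => B * |φ z.2|)
      ((volume.restrict (Set.Icc a b)).prod (volume.restrict (Set.Icc a b))) :=
    (integrable_const B).mul_prod hφ.abs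
  refine Integrable.mono' hbound (hφ.aestronglyMeasurable.comp_snd.mul hCm) ?_
  have hae : ∀ᵐ z : ℝ × ℝ
      ∂((volume.restrict (Set.Icc a b)).prod (volume.restrict (Set.Icc a b))),
      z ∈ Set.Icc a b ×ˢ Set.Icc a b := by
    rw [hprod]; exact ae_restrict_mem (hSm.prod hSm)
  filter_upwards [hae] with z hz
  rw [norm_mul, Real.norm_eq_abs, Real.norm_eq_abs, mul_comm B]
  exact mul_le_mul_of_nonneg_left (hB z hz) (abs_nonneg _)

/-- continuity in the parameter of a parametric integral with an integrable weight. -/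
private lemma aux_cont_w {φ : ℝ → ℝ} {C : ℝ × ℝ → ℝ}
    (hφ : IntegrableOn φ (Set.Icc a b))
    (hC : ContinuousOn C (Set.Icc a b ×ˢ Set.Icc a b)) :
    ContinuousOn (fun y => ∫ x in Set.Icc a b, φ x * C (x, y)) (Set.Icc a b) := by
  have hSm : MeasurableSet (Set.Icc a b) := measurableSet_Icc
  obtain ⟨B, hB⟩ := (isCompact_Icc.prod isCompact_Icc).exists_bound_of_continuousOn hC
  refine continuousOn_of_dominated (bound := fun x => |φ x| * B) ?_ ?_ (hφ.abs.mul_const B) ?_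
  · intro y hy
    refine hφ.aestronglyMeasurable.mul ?_
    exact ((hC.comp (continuous_id.prodMk continuous_const).continuousOn
      (fun x hx => Set.mk_mem_prod hx hy)).aestronglyMeasurable hSm)
  · intro y hy
    filter_upwards [ae_restrict_mem hSm] with x hx
    rw [norm_mul, Real.norm_eq_abs, Real.norm_eq_abs]
    exact mul_le_mul_of_nonneg_left (hB (x, y) (Set.mk_mem_prod hx hy)) (abs_nonneg _)
  · filter_upwards [ae_restrict_mem hSm] with x hx
    exact continuousOn_const.mul (hC.comp
      (continuous_const.prodMk continuous_id).continuousOn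
      (fun y hy => Set.mk_mem_prod hx hy))

/-- continuity in the parameter of a parametric integral of a continuous kernel. -/
private lemma aux_cont_c {C : ℝ × ℝ → ℝ}
    (hC : ContinuousOn C (Set.Icc a b ×ˢ Set.Icc a b)) :
    ContinuousOn (fun y => ∫ x in Set.Icc a b, C (x, y)) (Set.Icc a b) := by
  have h := aux_cont_w (φ := fun _ => (1 : ℝ))
    (integrableOn_const measure_Icc_lt_top.ne) hC
  refine h.congr fun y _ => ?_
  simp

/-- positivity of the integral of a positive continuous function on `Icc a b`. -/
private lemma aux_pos (hab : a < b) {f : ℝ → ℝ}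
    (hf : ContinuousOn f (Set.Icc a b)) (hpos : ∀ x ∈ Set.Icc a b, 0 < f x) :
    0 < ∫ x in Set.Icc a b, f x := by
  have hSm : MeasurableSet (Set.Icc a b) := measurableSet_Icc
  rw [setIntegral_pos_iff_support_of_nonneg_ae ?_ (hf.integrableOn_compact isCompact_Icc)]
  · refine lt_of_lt_of_le ?_ (measure_mono
      (fun x hx => ⟨fun h => (hpos x hx).ne' h, hx⟩))
    rw [Real.volume_Icc]
    exact ENNReal.ofReal_pos.2 (sub_pos.2 hab)
  · filter_upwards [ae_restrict_mem hSm] with x hx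
    exact (hpos x hx).le

/-- if `φ * ψ` is a.e. strongly measurable and `ψ` is a.e. strongly measurable and
nonvanishing on the interval, then `φ` is a.e. strongly measurable. -/
private lemma aux_div {φ ψ : ℝ → ℝ}
    (hψ : AEStronglyMeasurable ψ (volume.restrict (Set.Icc a b)))
    (hψ0 : ∀ x ∈ Set.Icc a b, ψ x ≠ 0)
    (h : AEStronglyMeasurable (fun μ => φ μ * ψ μ) (volume.restrict (Set.Icc a b))) :
    AEStronglyMeasurable φ (volume.restrict (Set.Icc a b)) := by
  refine ((h.aemeasurable.div hψ.aemeasurable).aestronglyMeasurable).congr ?_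
  filter_upwards [ae_restrict_mem measurableSet_Icc] with μ hμ
  show φ μ * ψ μ / ψ μ = φ μ
  rw [mul_div_assoc, div_self (hψ0 μ hμ), mul_one]

end AuxStmt7

/-- The attainment part of Theorem 1: if `ζ₂, …, ζ_{p+1}` are orthonormal eigenfunctions
of `P_{g₀}` (each orthogonal to `√g₀`) with eigenvalues `λ₂, …, λ_{p+1}`, then the
statistics `T_j = ζ_{j+1}/√g₀` are centered and `g₀`-orthonormal (so the `μ`-sample
Fisher information is the identity) and the `X`-sample Fisher information matrix `M(T)`
is diagonal with entries `λ₂, …, λ_{p+1}`.  Here `ζ` and `lam` are indexed by `Fin p`,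
with `ζ j` playing the role of `ζ_{j+1}` and `lam j` that of `λ_{j+1}`. -/
theorem stmt_7 (a b : ℝ) (hab : a < b)
    (K : ℝ → ℝ → ℝ) (g₀ : ℝ → ℝ)
    (hK : ContinuousOn (fun q : ℝ × ℝ => K q.1 q.2) (Set.Icc a b ×ˢ Set.Icc a b))
    (hKpos : ∀ μ ∈ Set.Icc a b, ∀ x ∈ Set.Icc a b, 0 < K μ x)
    (hKsymm : ∀ μ x, K μ x = K x μ)
    (hKint : ∀ μ ∈ Set.Icc a b, ∫ x in Set.Icc a b, K μ x = 1)
    (hg₀ : ContinuousOn g₀ (Set.Icc a b))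
    (hg₀pos : ∀ μ ∈ Set.Icc a b, 0 < g₀ μ)
    (hg₀int : ∫ μ in Set.Icc a b, g₀ μ = 1)
    (f₀ : ℝ → ℝ)
    (hf₀ : ∀ x, f₀ x = ∫ μ in Set.Icc a b, K μ x * g₀ μ)
    (P : ℝ → ℝ → ℝ)
    (hP : ∀ μ₁ μ₂, P μ₁ μ₂ =
      ∫ x in Set.Icc a b,
        Real.sqrt (g₀ μ₁) * K μ₁ x * (f₀ x)⁻¹ * K x μ₂ * Real.sqrt (g₀ μ₂))
    (p : ℕ)
    (ζ : Fin p → ℝ → ℝ) (lam : Fin p → ℝ)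
    (horth : ∀ j k, ∫ μ in Set.Icc a b, ζ j μ * ζ k μ = if j = k then 1 else 0)
    (hperp : ∀ j, ∫ μ in Set.Icc a b, ζ j μ * Real.sqrt (g₀ μ) = 0)
    (heig : ∀ j, ∀ μ₁ ∈ Set.Icc a b,
      ∫ μ₂ in Set.Icc a b, P μ₁ μ₂ * ζ j μ₂ = lam j * ζ j μ₁)
    (T : Fin p → ℝ → ℝ)
    (hT : ∀ j, ∀ μ ∈ Set.Icc a b, T j μ = ζ j μ / Real.sqrt (g₀ μ)) :
    (∀ j, ∫ μ in Set.Icc a b, T j μ * g₀ μ = 0) ∧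
    (∀ j k, ∫ μ in Set.Icc a b, T j μ * T k μ * g₀ μ = if j = k then 1 else 0) ∧
    (∀ j k,
      (∫ x in Set.Icc a b,
        (∫ μ in Set.Icc a b, T j μ * K μ x * g₀ μ) *
          (∫ μ in Set.Icc a b, T k μ * K μ x * g₀ μ) * (f₀ x)⁻¹)
        = if j = k then lam j else 0) := by
  have hSm : MeasurableSet (Set.Icc a b) := measurableSet_Icc
  haveI : IsFiniteMeasure (volume.restrict (Set.Icc a b)) := aux_fin a b
  have hg₀i : IntegrableOn g₀ (Set.Icc a b) := hg₀.integrableOn_compact isCompact_Icc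
  have hsg : ContinuousOn (fun μ => Real.sqrt (g₀ μ)) (Set.Icc a b) :=
    Real.continuous_sqrt.comp_continuousOn hg₀
  have hsgpos : ∀ μ ∈ Set.Icc a b, 0 < Real.sqrt (g₀ μ) :=
    fun μ hμ => Real.sqrt_pos.2 (hg₀pos μ hμ)
  -- part 1 pointwise identity
  have hTg : ∀ i : Fin p, ∀ μ ∈ Set.Icc a b,
      T i μ * g₀ μ = ζ i μ * Real.sqrt (g₀ μ) := by
    intro i μ hμ
    have h2 : Real.sqrt (g₀ μ) * Real.sqrt (g₀ μ) = g₀ μ :=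
      Real.mul_self_sqrt (hg₀pos μ hμ).le
    rw [hT i μ hμ, div_mul_eq_mul_div, div_eq_iff (hsgpos μ hμ).ne']
    linear_combination -(ζ i μ) * h2
  -- part 2 pointwise identity
  have hTTg : ∀ i k : Fin p, ∀ μ ∈ Set.Icc a b,
      T i μ * T k μ * g₀ μ = ζ i μ * ζ k μ := by
    intro i k μ hμ
    have h2 : Real.sqrt (g₀ μ) * Real.sqrt (g₀ μ) = g₀ μ :=
      Real.mul_self_sqrt (hg₀pos μ hμ).le
    rw [hT i μ hμ, hT k μ hμ, div_mul_div_comm, h2,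
      div_mul_cancel₀ _ (hg₀pos μ hμ).ne']
  -- rewriting of the score integrals
  have h0 : ∀ (i : Fin p) (x : ℝ),
      (∫ μ in Set.Icc a b, T i μ * K μ x * g₀ μ)
        = ∫ μ in Set.Icc a b, ζ i μ * (Real.sqrt (g₀ μ) * K μ x) := by
    intro i x
    refine setIntegral_congr_fun hSm fun μ hμ => ?_
    have h2 : Real.sqrt (g₀ μ) * Real.sqrt (g₀ μ) = g₀ μ :=
      Real.mul_self_sqrt (hg₀pos μ hμ).le
    rw [hT i μ hμ, div_mul_eq_mul_div, div_mul_eq_mul_div,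
      div_eq_iff (hsgpos μ hμ).ne']
    linear_combination -(ζ i μ * K μ x) * h2
  -- f₀ is continuous and positive on the interval
  have hf₀cont : ContinuousOn f₀ (Set.Icc a b) := by
    refine (aux_cont_w hg₀i hK).congr fun x _ => ?_
    rw [hf₀ x]
    exact setIntegral_congr_fun hSm fun μ _ => mul_comm _ _
  have hf₀pos : ∀ x ∈ Set.Icc a b, 0 < f₀ x := by
    intro x hx
    rw [hf₀ x]
    refine aux_pos hab ?_ fun μ hμ => mul_pos (hKpos μ hμ x hx) (hg₀pos μ hμ)
    exact (hK.comp (continuous_id.prodMk continuous_const).continuousOn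
      fun μ hμ => Set.mk_mem_prod hμ hx).mul hg₀
  have hinv : ContinuousOn (fun x => (f₀ x)⁻¹) (Set.Icc a b) :=
    hf₀cont.inv₀ fun x hx => (hf₀pos x hx).ne'
  -- square integrability of the ζ's
  have hζsq : ∀ i : Fin p, IntegrableOn (fun μ => ζ i μ * ζ i μ) (Set.Icc a b) := by
    intro i
    by_contra h
    have h1 := horth i i
    rw [integral_undef h] at h1
    simp at h1
  have hζint : ∀ i : Fin p,
      AEStronglyMeasurable (ζ i) (volume.restrict (Set.Icc a b)) →
      IntegrableOn (ζ i) (Set.Icc a b) := by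
    intro i hQ
    refine Integrable.mono' ((hζsq i).add (integrable_const 1)) hQ ?_
    refine Filter.Eventually.of_forall fun μ => ?_
    simp only [Pi.add_apply, Real.norm_eq_abs]
    nlinarith [sq_nonneg (|ζ i μ| - 1), abs_mul_abs_self (ζ i μ), abs_nonneg (ζ i μ)]
  refine ⟨?_, ?_, ?_⟩
  · intro j
    rw [setIntegral_congr_fun hSm fun μ hμ => hTg j μ hμ]
    exact hperp j
  · intro j k
    rw [setIntegral_congr_fun hSm fun μ hμ => hTTg j k μ hμ]
    exact horth j k
  · intro j k
    simp only [h0]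
    by_cases hQ : AEStronglyMeasurable (ζ j) (volume.restrict (Set.Icc a b))
        ∧ AEStronglyMeasurable (ζ k) (volume.restrict (Set.Icc a b))
    · obtain ⟨hQj, hQk⟩ := hQ
      have hij := hζint j hQj
      have hik := hζint k hQk
      have hCk : ContinuousOn (fun q : ℝ × ℝ => Real.sqrt (g₀ q.1) * K q.1 q.2)
          (Set.Icc a b ×ˢ Set.Icc a b) :=
        (hsg.comp continuous_fst.continuousOn fun q hq => hq.1).mul hK
      have hAk : ContinuousOn
          (fun x => ∫ μ in Set.Icc a b, ζ k μ * (Real.sqrt (g₀ μ) * K μ x))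
          (Set.Icc a b) := aux_cont_w hik hCk
      calc ∫ x in Set.Icc a b,
            (∫ μ in Set.Icc a b, ζ j μ * (Real.sqrt (g₀ μ) * K μ x)) *
              (∫ μ in Set.Icc a b, ζ k μ * (Real.sqrt (g₀ μ) * K μ x)) * (f₀ x)⁻¹
          = ∫ x in Set.Icc a b, ∫ μ₁ in Set.Icc a b,
              ζ j μ₁ * (Real.sqrt (g₀ μ₁) * K μ₁ x *
                ((∫ μ in Set.Icc a b, ζ k μ * (Real.sqrt (g₀ μ) * K μ x)) * (f₀ x)⁻¹)) := by
            refine setIntegral_congr_fun hSm fun x hx => ?_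
            rw [mul_assoc, ← integral_mul_const]
            exact setIntegral_congr_fun hSm fun μ₁ _ => by ring
        _ = ∫ μ₁ in Set.Icc a b, ∫ x in Set.Icc a b,
              ζ j μ₁ * (Real.sqrt (g₀ μ₁) * K μ₁ x *
                ((∫ μ in Set.Icc a b, ζ k μ * (Real.sqrt (g₀ μ) * K μ x)) * (f₀ x)⁻¹)) := by
            refine integral_integral_swap ?_
            have hC : ContinuousOn (fun z : ℝ × ℝ => Real.sqrt (g₀ z.2) * K z.2 z.1 *
                ((∫ μ in Set.Icc a b, ζ k μ * (Real.sqrt (g₀ μ) * K μ z.1)) * (f₀ z.1)⁻¹))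
                (Set.Icc a b ×ˢ Set.Icc a b) := by
              refine ((hsg.comp continuous_snd.continuousOn fun z hz => hz.2).mul
                (hK.comp (continuous_snd.prodMk continuous_fst).continuousOn
                  fun z hz => Set.mk_mem_prod hz.2 hz.1)).mul
                ((hAk.comp continuous_fst.continuousOn fun z hz => hz.1).mul
                  (hinv.comp continuous_fst.continuousOn fun z hz => hz.1))
            exact aux_int_snd hij hC
        _ = ∫ μ₁ in Set.Icc a b, ζ j μ₁ * (lam k * ζ k μ₁) := by
            refine setIntegral_congr_fun hSm fun μ₁ hμ₁ => ?_
            rw [integral_const_mul]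
            congr 1
            calc ∫ x in Set.Icc a b, Real.sqrt (g₀ μ₁) * K μ₁ x *
                  ((∫ μ in Set.Icc a b, ζ k μ * (Real.sqrt (g₀ μ) * K μ x)) * (f₀ x)⁻¹)
                = ∫ x in Set.Icc a b, ∫ μ₂ in Set.Icc a b,
                    ζ k μ₂ * (Real.sqrt (g₀ μ₁) * K μ₁ x * (f₀ x)⁻¹ * K x μ₂ *
                      Real.sqrt (g₀ μ₂)) := by
                  refine setIntegral_congr_fun hSm fun x hx => ?_
                  rw [show Real.sqrt (g₀ μ₁) * K μ₁ x *
                      ((∫ μ in Set.Icc a b, ζ k μ * (Real.sqrt (g₀ μ) * K μ x)) * (f₀ x)⁻¹)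
                      = (∫ μ in Set.Icc a b, ζ k μ * (Real.sqrt (g₀ μ) * K μ x)) *
                        (Real.sqrt (g₀ μ₁) * K μ₁ x * (f₀ x)⁻¹) from by ring,
                    ← integral_mul_const]
                  refine setIntegral_congr_fun hSm fun μ₂ _ => ?_
                  rw [hKsymm μ₂ x]; ring
              _ = ∫ μ₂ in Set.Icc a b, ∫ x in Set.Icc a b,
                    ζ k μ₂ * (Real.sqrt (g₀ μ₁) * K μ₁ x * (f₀ x)⁻¹ * K x μ₂ *
                      Real.sqrt (g₀ μ₂)) := by
                  refine integral_integral_swap ?_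
                  have hC2 : ContinuousOn (fun z : ℝ × ℝ =>
                      Real.sqrt (g₀ μ₁) * K μ₁ z.1 * (f₀ z.1)⁻¹ * K z.1 z.2 *
                        Real.sqrt (g₀ z.2)) (Set.Icc a b ×ˢ Set.Icc a b) := by
                    refine (((continuousOn_const.mul
                      (hK.comp (continuous_const.prodMk continuous_fst).continuousOn
                        fun z hz => Set.mk_mem_prod hμ₁ hz.1)).mul
                      (hinv.comp continuous_fst.continuousOn fun z hz => hz.1)).mul hK).mul
                      (hsg.comp continuous_snd.continuousOn fun z hz => hz.2)
                  exact aux_int_snd hik hC2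
              _ = ∫ μ₂ in Set.Icc a b, P μ₁ μ₂ * ζ k μ₂ := by
                  refine setIntegral_congr_fun hSm fun μ₂ _ => ?_
                  rw [integral_const_mul, ← hP μ₁ μ₂, mul_comm]
              _ = lam k * ζ k μ₁ := heig k μ₁ hμ₁
        _ = lam k * ∫ μ₁ in Set.Icc a b, ζ j μ₁ * ζ k μ₁ := by
            rw [← integral_const_mul]
            exact setIntegral_congr_fun hSm fun μ₁ _ => by ring
        _ = if j = k then lam j else 0 := by
            rw [horth j k]
            by_cases h : j = k
            · subst h; simp
            · simp [h]
    · -- degenerate (non-measurable) case: all the integrals are junk values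
      have hA0 : ∀ i : Fin p,
          ¬ AEStronglyMeasurable (ζ i) (volume.restrict (Set.Icc a b)) →
          ∀ x ∈ Set.Icc a b,
          (∫ μ in Set.Icc a b, ζ i μ * (Real.sqrt (g₀ μ) * K μ x)) = 0 := by
        intro i hQi x hx
        refine integral_undef fun hint => hQi ?_
        refine aux_div (ψ := fun μ => Real.sqrt (g₀ μ) * K μ x) ?_ ?_
          hint.aestronglyMeasurable
        · exact ((hsg.mul (hK.comp (continuous_id.prodMk continuous_const).continuousOn
            fun μ hμ => Set.mk_mem_prod hμ hx)).aestronglyMeasurable hSm)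
        · exact fun μ hμ => (mul_pos (hsgpos μ hμ) (hKpos μ hμ x hx)).ne'
      have hM0 : (∫ x in Set.Icc a b,
          (∫ μ in Set.Icc a b, ζ j μ * (Real.sqrt (g₀ μ) * K μ x)) *
            (∫ μ in Set.Icc a b, ζ k μ * (Real.sqrt (g₀ μ) * K μ x)) * (f₀ x)⁻¹) = 0 := by
        refine integral_eq_zero_of_ae ?_
        filter_upwards [ae_restrict_mem hSm] with x hx
        rcases not_and_or.1 hQ with h | h
        · rw [hA0 j h x hx]; simp
        · rw [hA0 k h x hx]; simp
      rw [hM0]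
      by_cases h : j = k
      · subst h
        have hQj : ¬ AEStronglyMeasurable (ζ j) (volume.restrict (Set.Icc a b)) := by
          rcases not_and_or.1 hQ with h | h <;> exact h
        have hz : ∀ μ ∈ Set.Icc a b, lam j * ζ j μ = 0 := by
          intro μ hμ
          rw [← heig j μ hμ]
          refine integral_undef fun hint => hQj ?_
          have hC : ContinuousOn (fun z : ℝ × ℝ =>
              Real.sqrt (g₀ μ) * K μ z.1 * (f₀ z.1)⁻¹ * K z.1 z.2 *
                Real.sqrt (g₀ z.2)) (Set.Icc a b ×ˢ Set.Icc a b) := by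
            refine (((continuousOn_const.mul
              (hK.comp (continuous_const.prodMk continuous_fst).continuousOn
                fun z hz => Set.mk_mem_prod hμ hz.1)).mul
              (hinv.comp continuous_fst.continuousOn fun z hz => hz.1)).mul hK).mul
              (hsg.comp continuous_snd.continuousOn fun z hz => hz.2)
          have hPc : ContinuousOn (fun μ₂ => P μ μ₂) (Set.Icc a b) :=
            (aux_cont_c hC).congr fun μ₂ _ => hP μ μ₂
          have hPpos : ∀ μ₂ ∈ Set.Icc a b, P μ μ₂ ≠ 0 := by
            intro μ₂ hμ₂
            rw [hP μ μ₂]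
            refine (aux_pos hab ?_ ?_).ne'
            · exact hC.comp (continuous_id.prodMk continuous_const).continuousOn
                fun x hx => Set.mk_mem_prod hx hμ₂
            · intro x hx
              exact mul_pos (mul_pos (mul_pos (mul_pos (hsgpos μ hμ)
                (hKpos μ hμ x hx)) (inv_pos.2 (hf₀pos x hx)))
                (hKpos x hx μ₂ hμ₂)) (hsgpos μ₂ hμ₂)
          refine aux_div (ψ := fun μ₂ => P μ μ₂) (hPc.aestronglyMeasurable hSm) hPpos ?_
          exact hint.aestronglyMeasurable.congr
            (Filter.Eventually.of_forall fun μ₂ => mul_comm _ _)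
        rcases eq_or_ne (lam j) 0 with h0 | h0
        · simp [h0]
        · exfalso
          have hζ0 : ∀ μ ∈ Set.Icc a b, ζ j μ = 0 := fun μ hμ =>
            (mul_eq_zero.1 (hz μ hμ)).resolve_left h0
          have h1 := horth j j
          rw [if_pos rfl] at h1
          rw [setIntegral_congr_fun (g := fun _ => (0 : ℝ)) hSm
            (fun μ hμ => by rw [hζ0 μ hμ]; ring), integral_zero] at h1
          exact zero_ne_one h1
      · simp [h]
end

section
/- Let φ(s) = (2π)^{-1/2} e^{−s²/2}, let σ > 0, g_σ(μ) = σ^{-1} φ(μ/σ), and let H_j(s) = (1/√(j!)) e^{s²/2} (d/ds)^j e^{−s²/2} denote the normalized Hermite polynomials. Then for every integer j ≥ 0 and every x ∈ ℝ, ∫_ℝ φ(x−μ) g_σ(μ) H_j(μ/σ) dμ = (σ/√(1+σ²))^j · (1+σ²)^{-1/2} φ(x/√(1+σ²)) H_j(x/√(1+σ²)). -/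
/-- The standard Gaussian density `φ(s) = (2π)^{-1/2} e^{-s²/2}`. -/
noncomputable def gaussDens (s : ℝ) : ℝ :=
  (Real.sqrt (2 * Real.pi))⁻¹ * Real.exp (-s ^ 2 / 2)

/-- The normalized Hermite polynomials
`H_j(s) = (1/√(j!)) e^{s²/2} (d/ds)^j e^{-s²/2}`. -/
noncomputable def hermiteN (j : ℕ) (s : ℝ) : ℝ :=
  (Real.sqrt (Nat.factorial j))⁻¹ * Real.exp (s ^ 2 / 2) *
    iteratedDeriv j (fun u => Real.exp (-u ^ 2 / 2)) s

namespace Stmt8Aux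

open Real MeasureTheory Polynomial Filter Set Topology Nat


noncomputable def Hr (n : ℕ) : Polynomial ℝ := (Polynomial.hermite n).map (Int.castRingHom ℝ)

lemma Hr_zero : Hr 0 = 1 := by simp [Hr, Polynomial.hermite_zero]

lemma Hr_one : Hr 1 = X := by simp [Hr, Polynomial.hermite_one]

lemma Hr_succ (n : ℕ) : Hr (n + 1) = X * Hr n - derivative (Hr n) := by
  simp [Hr, Polynomial.hermite_succ, Polynomial.map_mul, Polynomial.map_sub, derivative_map]

lemma eval_Hr (n : ℕ) (x : ℝ) : eval x (Hr n) = aeval x (Polynomial.hermite n) := by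
  simp [Hr, aeval_def, eval₂_eq_eval_map]

lemma derivative_Hr (n : ℕ) : derivative (Hr (n + 1)) = C ((n : ℝ) + 1) * Hr n := by
  induction n with
  | zero => simp [Hr_one, Hr_zero]
  | succ n ih =>
    rw [Hr_succ (n + 1), derivative_sub, derivative_mul, derivative_X, one_mul, ih,
      derivative_mul, derivative_C, zero_mul, zero_add]
    have hC : (C ((↑(n+1):ℝ) + 1) : ℝ[X]) = C ((n:ℝ)+1) + C 1 := by
      rw [← C_add]; push_cast; ring_nf
    rw [hC, C_1, Hr_succ n]; ring

lemma gauss_bound (n : ℕ) (x : ℝ) :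
    |x ^ n * Real.exp (-(x ^ 2 / 2))| ≤ (n ! : ℝ) * Real.exp 1 * Real.exp (-(x ^ 2 / 4)) := by
  rw [abs_mul, abs_of_nonneg (Real.exp_pos _).le, abs_pow]
  have hf : (0 : ℝ) < n ! := by positivity
  have h1 : |x| ^ n ≤ (n ! : ℝ) * Real.exp |x| := by
    have h := Real.pow_div_factorial_le_exp (x := |x|) (abs_nonneg x) n
    calc |x| ^ n = (|x| ^ n / n !) * n ! := by field_simp
    _ ≤ Real.exp |x| * n ! := by gcongr
    _ = _ := by ring
  calc |x| ^ n * Real.exp (-(x ^ 2 / 2))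
      ≤ ((n ! : ℝ) * Real.exp |x|) * Real.exp (-(x ^ 2 / 2)) :=
        mul_le_mul_of_nonneg_right h1 (Real.exp_pos _).le
  _ = (n ! : ℝ) * Real.exp (|x| + -(x ^ 2 / 2)) := by rw [Real.exp_add]; ring
  _ ≤ (n ! : ℝ) * Real.exp (1 + -(x ^ 2 / 4)) := by
        refine mul_le_mul_of_nonneg_left (Real.exp_le_exp.mpr ?_) hf.le
        nlinarith [sq_nonneg (|x| - 2), sq_abs x]
  _ = _ := by rw [Real.exp_add]; ring

lemma integrable_pow_gauss (n : ℕ) :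
    Integrable fun x : ℝ => x ^ n * Real.exp (-(x ^ 2 / 2)) := by
  have hg : Integrable fun x : ℝ => (n ! : ℝ) * Real.exp 1 * Real.exp (-(4⁻¹ : ℝ) * x ^ 2) :=
    (integrable_exp_neg_mul_sq (by norm_num)).const_mul _
  refine hg.mono' (Continuous.aestronglyMeasurable (by continuity)) ?_
  filter_upwards with x
  have h := gauss_bound n x
  rw [Real.norm_eq_abs, show (-(4⁻¹:ℝ) * x ^ 2) = -(x ^ 2 / 4) by ring]
  exact h

lemma tendsto_pow_gauss {l : Filter ℝ} (hl : Tendsto (fun x : ℝ => x ^ 2) l atTop) (n : ℕ) :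
    Tendsto (fun x : ℝ => x ^ n * Real.exp (-(x ^ 2 / 2))) l (𝓝 0) := by
  refine squeeze_zero_norm (a := fun x : ℝ => (n ! : ℝ) * Real.exp 1 * Real.exp (-(x ^ 2 / 4)))
    (fun x => by rw [Real.norm_eq_abs]; exact gauss_bound n x) ?_
  have h2 : Tendsto (fun x : ℝ => -(x ^ 2 / 4)) l atBot := by
    apply tendsto_neg_atTop_atBot.comp
    exact (hl.atTop_div_const (by norm_num))
  have h3 := Real.tendsto_exp_atBot.comp h2
  simpa using h3.const_mul ((n ! : ℝ) * Real.exp 1)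

lemma integrable_poly_gauss (p : ℝ[X]) :
    Integrable fun x : ℝ => eval x p * Real.exp (-(x ^ 2 / 2)) := by
  induction p using Polynomial.induction_on' with
  | add p q hp hq => simpa [add_mul, Pi.add_def] using hp.add hq
  | monomial n c =>
    simpa [eval_monomial, mul_assoc] using (integrable_pow_gauss n).const_mul c

lemma tendsto_poly_gauss (p : ℝ[X]) {l : Filter ℝ} (hl : Tendsto (fun x : ℝ => x ^ 2) l atTop) :
    Tendsto (fun x : ℝ => eval x p * Real.exp (-(x ^ 2 / 2))) l (𝓝 0) := by
  induction p using Polynomial.induction_on' with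
  | add p q hp hq => simpa [add_mul] using hp.add hq
  | monomial n c =>
    simpa [eval_monomial, mul_assoc] using (tendsto_pow_gauss hl n).const_mul c

lemma sq_tendsto_atTop : Tendsto (fun x : ℝ => x ^ 2) atTop atTop :=
  tendsto_pow_atTop (by norm_num : (2:ℕ) ≠ 0)

lemma sq_tendsto_atBot : Tendsto (fun x : ℝ => x ^ 2) atBot atTop := by
  have h := (tendsto_pow_atTop (by norm_num : (2:ℕ) ≠ 0)).comp
    (tendsto_abs_atBot_atTop : Tendsto (fun x : ℝ => |x|) atBot atTop)
  simpa [Function.comp_def, sq_abs] using h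


lemma integrable_gauss_eval (p : ℝ[X]) (a b : ℝ) :
    Integrable fun u : ℝ => Real.exp (-(u ^ 2 / 2)) * eval (a * u + b) p := by
  have h := integrable_poly_gauss (p.comp (C a * X + C b))
  convert h using 2 with u
  simp only [eval_comp, eval_add, eval_mul, eval_C, eval_X]
  ring

lemma integrable_gauss_eval' (p : ℝ[X]) (a b : ℝ) :
    Integrable fun u : ℝ => u * Real.exp (-(u ^ 2 / 2)) * eval (a * u + b) p := by
  have h := integrable_poly_gauss (X * p.comp (C a * X + C b))
  convert h using 2 with u
  simp only [eval_comp, eval_add, eval_mul, eval_C, eval_X]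
  ring

lemma tendsto_gauss_eval (p : ℝ[X]) (a b : ℝ) {l : Filter ℝ}
    (hl : Tendsto (fun x : ℝ => x ^ 2) l atTop) :
    Tendsto (fun u : ℝ => Real.exp (-(u ^ 2 / 2)) * eval (a * u + b) p) l (𝓝 0) := by
  have h := tendsto_poly_gauss (p.comp (C a * X + C b)) hl
  convert h using 2 with u
  simp only [eval_comp, eval_add, eval_mul, eval_C, eval_X]
  ring

lemma ibp (p : ℝ[X]) (a b : ℝ) :
    ∫ u : ℝ, u * Real.exp (-(u ^ 2 / 2)) * eval (a * u + b) p
      = a * ∫ u : ℝ, Real.exp (-(u ^ 2 / 2)) * eval (a * u + b) (derivative p) := by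
  set f : ℝ → ℝ := fun u => -(Real.exp (-(u ^ 2 / 2)) * eval (a * u + b) p) with hf
  set g : ℝ → ℝ := fun u => u * Real.exp (-(u ^ 2 / 2)) * eval (a * u + b) p
      - a * (Real.exp (-(u ^ 2 / 2)) * eval (a * u + b) (derivative p)) with hg
  have hderiv : ∀ u : ℝ, HasDerivAt f (g u) u := by
    intro u
    have h1 : HasDerivAt (fun u : ℝ => -(u ^ 2 / 2)) (-u) u := by
      have h := ((hasDerivAt_pow 2 u).div_const 2).neg
      simp only [Pi.neg_def] at h
      exact h.congr_deriv (by norm_num)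
    have hE : HasDerivAt (fun u : ℝ => Real.exp (-(u ^ 2 / 2)))
        (Real.exp (-(u ^ 2 / 2)) * -u) u := h1.exp
    have hinner : HasDerivAt (fun u : ℝ => a * u + b) a u := by
      simpa using ((hasDerivAt_id u).const_mul a).add_const b
    have hP : HasDerivAt (fun u : ℝ => eval (a * u + b) p)
        (eval (a * u + b) (derivative p) * a) u := by
      have h := (Polynomial.hasDerivAt p (a * u + b)).comp u hinner; exact h
    have h := (hE.mul hP).neg
    exact h.congr_deriv (by simp only [hg]; ring)
  have hg_int : Integrable g :=
    (integrable_gauss_eval' p a b).sub ((integrable_gauss_eval (derivative p) a b).const_mul a)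
  have htop : Tendsto f atTop (𝓝 0) := by
    have h := (tendsto_gauss_eval p a b sq_tendsto_atTop).neg
    simpa [hf] using h
  have hbot : Tendsto f atBot (𝓝 0) := by
    have h := (tendsto_gauss_eval p a b sq_tendsto_atBot).neg
    simpa [hf] using h
  have h1 : ∫ u in Iic (0:ℝ), g u = f 0 - 0 :=
    integral_Iic_of_hasDerivAt_of_tendsto (hderiv 0).continuousAt.continuousWithinAt
      (fun u _ => hderiv u) hg_int.integrableOn hbot
  have h2 : ∫ u in Ioi (0:ℝ), g u = 0 - f 0 :=
    integral_Ioi_of_hasDerivAt_of_tendsto (hderiv 0).continuousAt.continuousWithinAt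
      (fun u _ => hderiv u) hg_int.integrableOn htop
  have h0 : ∫ u : ℝ, g u = 0 := by
    rw [← intervalIntegral.integral_Iic_add_Ioi hg_int.integrableOn hg_int.integrableOn, h1, h2]
    ring
  have hsplit : ∫ u : ℝ, g u
      = (∫ u : ℝ, u * Real.exp (-(u ^ 2 / 2)) * eval (a * u + b) p)
        - ∫ u : ℝ, a * (Real.exp (-(u ^ 2 / 2)) * eval (a * u + b) (derivative p)) := by
    simp only [hg]
    exact integral_sub (integrable_gauss_eval' p a b)
      ((integrable_gauss_eval (derivative p) a b).const_mul a)
  rw [hsplit, integral_const_mul] at h0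
  linarith


lemma integral_gauss_line : ∫ u : ℝ, Real.exp (-(u ^ 2 / 2)) = Real.sqrt (2 * π) := by
  have h := integral_gaussian (2⁻¹ : ℝ)
  rw [show π / (2⁻¹ : ℝ) = 2 * π by ring] at h
  have e : ∀ u : ℝ, -(2⁻¹ : ℝ) * u ^ 2 = -(u ^ 2 / 2) := fun u => by ring
  simp_rw [e] at h
  exact h

lemma integral_odd_gauss : ∫ u : ℝ, u * Real.exp (-(u ^ 2 / 2)) = 0 := by
  have h := ibp 1 0 0
  simpa using h

lemma moment (a s b : ℝ) (hs : 0 < s) (has : a ^ 2 + s ^ 2 = 1) (j : ℕ) :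
    ∫ u : ℝ, Real.exp (-(u ^ 2 / 2)) * eval (a * u + b) (Hr j)
      = Real.sqrt (2 * π) * s ^ j * eval (b / s) (Hr j) := by
  have key : ∀ n : ℕ,
      (∫ u : ℝ, Real.exp (-(u ^ 2 / 2)) * eval (a * u + b) (Hr n)
        = Real.sqrt (2 * π) * s ^ n * eval (b / s) (Hr n)) ∧
      (∫ u : ℝ, Real.exp (-(u ^ 2 / 2)) * eval (a * u + b) (Hr (n + 1))
        = Real.sqrt (2 * π) * s ^ (n + 1) * eval (b / s) (Hr (n + 1))) := by
    intro n
    induction n with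
    | zero =>
      constructor
      · simp only [Hr_zero, eval_one, mul_one, pow_zero]
        rw [integral_gauss_line]
      · simp only [zero_add, Hr_one, eval_X, pow_one]
        have hsplit : (fun u : ℝ => Real.exp (-(u ^ 2 / 2)) * (a * u + b))
            = fun u => a * (u * Real.exp (-(u ^ 2 / 2))) + b * Real.exp (-(u ^ 2 / 2)) := by
          funext u; ring
        have hi1 : Integrable fun u : ℝ => u * Real.exp (-(u ^ 2 / 2)) := by
          simpa using integrable_pow_gauss 1
        have hi0 : Integrable fun u : ℝ => Real.exp (-(u ^ 2 / 2)) := by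
          simpa using integrable_pow_gauss 0
        rw [hsplit, integral_add (hi1.const_mul a) (hi0.const_mul b), integral_const_mul,
          integral_const_mul, integral_odd_gauss, integral_gauss_line]
        field_simp
        ring
    | succ n ih =>
      refine ⟨ih.2, ?_⟩
      have e1 : Hr (n + 1 + 1) = X * Hr (n + 1) - C ((n : ℝ) + 1) * Hr n := by
        rw [Hr_succ, derivative_Hr]
      have hfun : (fun u : ℝ => Real.exp (-(u ^ 2 / 2)) * eval (a * u + b) (Hr (n + 1 + 1)))
          = fun u => (a * (u * Real.exp (-(u ^ 2 / 2)) * eval (a * u + b) (Hr (n + 1)))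
              + b * (Real.exp (-(u ^ 2 / 2)) * eval (a * u + b) (Hr (n + 1))))
              - ((n : ℝ) + 1) * (Real.exp (-(u ^ 2 / 2)) * eval (a * u + b) (Hr n)) := by
        funext u
        rw [e1]
        simp only [eval_sub, eval_mul, eval_X, eval_C]
        ring
      have hA : Integrable (fun u : ℝ =>
          a * (u * Real.exp (-(u ^ 2 / 2)) * eval (a * u + b) (Hr (n + 1)))) :=
        (integrable_gauss_eval' _ a b).const_mul a
      have hB : Integrable (fun u : ℝ =>
          b * (Real.exp (-(u ^ 2 / 2)) * eval (a * u + b) (Hr (n + 1)))) :=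
        (integrable_gauss_eval _ a b).const_mul b
      have hC : Integrable (fun u : ℝ =>
          ((n : ℝ) + 1) * (Real.exp (-(u ^ 2 / 2)) * eval (a * u + b) (Hr n))) :=
        (integrable_gauss_eval _ a b).const_mul _
      have hAB : Integrable (fun u : ℝ =>
          a * (u * Real.exp (-(u ^ 2 / 2)) * eval (a * u + b) (Hr (n + 1)))
            + b * (Real.exp (-(u ^ 2 / 2)) * eval (a * u + b) (Hr (n + 1)))) := hA.add hB
      rw [hfun, integral_sub hAB hC, integral_add hA hB,
        integral_const_mul, integral_const_mul, integral_const_mul, ibp (Hr (n + 1)) a b,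
        derivative_Hr]
      have e2 : (fun u : ℝ => Real.exp (-(u ^ 2 / 2)) * eval (a * u + b) (C ((n : ℝ) + 1) * Hr n))
          = fun u => ((n : ℝ) + 1) * (Real.exp (-(u ^ 2 / 2)) * eval (a * u + b) (Hr n)) := by
        funext u; simp only [eval_mul, eval_C]; ring
      rw [e2, integral_const_mul, ih.1, ih.2]
      have e3 : eval (b / s) (Hr (n + 1 + 1))
          = b / s * eval (b / s) (Hr (n + 1)) - ((n : ℝ) + 1) * eval (b / s) (Hr n) := by
        rw [e1]; simp only [eval_sub, eval_mul, eval_X, eval_C]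
      rw [e3]
      have e4 : Real.sqrt (2 * π) * s ^ (n + 1 + 1)
            * (b / s * eval (b / s) (Hr (n + 1)) - ((n : ℝ) + 1) * eval (b / s) (Hr n))
          = b * (Real.sqrt (2 * π) * s ^ (n + 1) * eval (b / s) (Hr (n + 1)))
            - s ^ 2 * (((n : ℝ) + 1) * (Real.sqrt (2 * π) * s ^ n * eval (b / s) (Hr n))) := by
        field_simp
        ring
      rw [e4]
      have ha : a ^ 2 = 1 - s ^ 2 := by linarith
      linear_combination (((n : ℝ) + 1) * (Real.sqrt (2 * π) * s ^ n * eval (b / s) (Hr n))) * ha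
  exact (key j).1


lemma change_var (F : ℝ → ℝ) (c m : ℝ) (hc : 0 < c) :
    ∫ y : ℝ, F y = c * ∫ u : ℝ, F (c * u + m) := by
  have h1 := Measure.integral_comp_mul_left (fun y => F (y + m)) c
  simp only [smul_eq_mul] at h1
  rw [integral_add_right_eq_self] at h1
  rw [abs_of_pos (inv_pos.mpr hc)] at h1
  rw [h1]
  field_simp

lemma change_var' (F G : ℝ → ℝ) (c m : ℝ) (hc : 0 < c) (hFG : ∀ u, F (c * u + m) = G u) :
    ∫ y : ℝ, F y = c * ∫ u : ℝ, G u := by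
  rw [change_var F c m hc]
  congr 1
  exact integral_congr_ae (Filter.Eventually.of_forall hFG)



open Real MeasureTheory Polynomial Filter Set Topology Nat

lemma hermiteN_eq (j : ℕ) (t : ℝ) :
    hermiteN j t = (Real.sqrt (Nat.factorial j))⁻¹ * ((-1 : ℝ) ^ j * eval t (Hr j)) := by
  have hfe : (fun u : ℝ => Real.exp (-u ^ 2 / 2)) = fun y => Real.exp (-(y ^ 2 / 2)) := by
    funext y; rw [neg_div]
  rw [hermiteN, iteratedDeriv_eq_iterate, hfe,
    Polynomial.deriv_gaussian_eq_hermite_mul_gaussian, ← eval_Hr, Real.exp_neg]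
  have h := Real.exp_ne_zero (t ^ 2 / 2)
  field_simp

lemma hmain (σ : ℝ) (hσ : 0 < σ) (j : ℕ) (x : ℝ) :
    ∫ μ : ℝ, gaussDens (x - μ) * (σ⁻¹ * gaussDens (μ / σ)) * eval (μ / σ) (Hr j)
      = (σ / Real.sqrt (1 + σ ^ 2)) ^ j *
          ((Real.sqrt (1 + σ ^ 2))⁻¹ * gaussDens (x / Real.sqrt (1 + σ ^ 2)) *
            eval (x / Real.sqrt (1 + σ ^ 2)) (Hr j)) := by
  have hσ' : σ ≠ 0 := ne_of_gt hσ
  set τ : ℝ := Real.sqrt (1 + σ ^ 2) with hτ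
  have hτpos : 0 < τ := Real.sqrt_pos.mpr (by positivity)
  have hτ' : τ ≠ 0 := ne_of_gt hτpos
  have hτsq : τ ^ 2 = 1 + σ ^ 2 := Real.sq_sqrt (by positivity)
  have h2π : (0 : ℝ) < Real.sqrt (2 * π) := Real.sqrt_pos.mpr (by positivity)
  have hs : 0 < σ / τ := div_pos hσ hτpos
  have hint : (fun μ : ℝ => gaussDens (x - μ) * (σ⁻¹ * gaussDens (μ / σ)) * eval (μ / σ) (Hr j))
      = fun μ : ℝ =>
        ((Real.sqrt (2 * π))⁻¹ * (Real.sqrt (2 * π))⁻¹ * σ⁻¹ * Real.exp (-(x ^ 2 / τ ^ 2) / 2))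
          * (Real.exp (-((μ - σ ^ 2 * x / τ ^ 2) / (σ / τ)) ^ 2 / 2) * eval (μ / σ) (Hr j)) := by
    funext μ
    simp only [gaussDens]
    have hexp : Real.exp (-(x - μ) ^ 2 / 2) * Real.exp (-(μ / σ) ^ 2 / 2)
        = Real.exp (-(x ^ 2 / τ ^ 2) / 2)
          * Real.exp (-((μ - σ ^ 2 * x / τ ^ 2) / (σ / τ)) ^ 2 / 2) := by
      rw [← Real.exp_add, ← Real.exp_add]
      congr 1
      rw [div_pow, div_pow (μ - σ ^ 2 * x / τ ^ 2), div_pow σ τ, hτsq]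
      have h1σ : (1 : ℝ) + σ ^ 2 ≠ 0 := by positivity
      field_simp
      ring
    calc (Real.sqrt (2 * π))⁻¹ * Real.exp (-(x - μ) ^ 2 / 2)
          * (σ⁻¹ * ((Real.sqrt (2 * π))⁻¹ * Real.exp (-(μ / σ) ^ 2 / 2))) * eval (μ / σ) (Hr j)
        = (Real.sqrt (2 * π))⁻¹ * (Real.sqrt (2 * π))⁻¹ * σ⁻¹
            * (Real.exp (-(x - μ) ^ 2 / 2) * Real.exp (-(μ / σ) ^ 2 / 2)) * eval (μ / σ) (Hr j) := by
          ring
    _ = _ := by rw [hexp]; ring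
  rw [hint, integral_const_mul]
  have hchg := change_var'
      (fun μ : ℝ => Real.exp (-((μ - σ ^ 2 * x / τ ^ 2) / (σ / τ)) ^ 2 / 2) * eval (μ / σ) (Hr j))
      (fun u : ℝ => Real.exp (-(u ^ 2 / 2)) * eval (τ⁻¹ * u + σ * x / τ ^ 2) (Hr j))
      (σ / τ) (σ ^ 2 * x / τ ^ 2) hs ?_
  · rw [hchg]
    have hsum : (τ⁻¹) ^ 2 + (σ / τ) ^ 2 = 1 := by
      rw [inv_pow, div_pow, hτsq]
      have h1σ : (1 : ℝ) + σ ^ 2 ≠ 0 := by positivity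
      field_simp
    rw [moment τ⁻¹ (σ / τ) (σ * x / τ ^ 2) hs hsum j]
    have hbs : σ * x / τ ^ 2 / (σ / τ) = x / τ := by
      field_simp
    rw [hbs]
    simp only [gaussDens]
    rw [show (-(x / τ) ^ 2 / 2 : ℝ) = -(x ^ 2 / τ ^ 2) / 2 by rw [div_pow]]
    field_simp
  · intro u
    have e1 : (σ / τ * u + σ ^ 2 * x / τ ^ 2 - σ ^ 2 * x / τ ^ 2) / (σ / τ) = u := by
      field_simp
      ring
    have e2 : (σ / τ * u + σ ^ 2 * x / τ ^ 2) / σ = τ⁻¹ * u + σ * x / τ ^ 2 := by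
      field_simp
    show Real.exp (-((σ / τ * u + σ ^ 2 * x / τ ^ 2 - σ ^ 2 * x / τ ^ 2) / (σ / τ)) ^ 2 / 2)
        * eval ((σ / τ * u + σ ^ 2 * x / τ ^ 2) / σ) (Hr j)
        = Real.exp (-(u ^ 2 / 2)) * eval (τ⁻¹ * u + σ * x / τ ^ 2) (Hr j)
    rw [e1, e2, neg_div]


end Stmt8Aux

/-- The Gaussian–Hermite convolution identity from the proof of Theorem 2:
`∫ φ(x−μ) g_σ(μ) H_j(μ/σ) dμ
  = (σ/√(1+σ²))^j (1+σ²)^{-1/2} φ(x/√(1+σ²)) H_j(x/√(1+σ²))`,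
where `g_σ(μ) = σ⁻¹ φ(μ/σ)`. -/
theorem stmt_8 (σ : ℝ) (hσ : 0 < σ) (j : ℕ) (x : ℝ) :
    ∫ μ : ℝ, gaussDens (x - μ) * (σ⁻¹ * gaussDens (μ / σ)) * hermiteN j (μ / σ)
      = (σ / Real.sqrt (1 + σ ^ 2)) ^ j *
          ((Real.sqrt (1 + σ ^ 2))⁻¹ * gaussDens (x / Real.sqrt (1 + σ ^ 2)) *
            hermiteN j (x / Real.sqrt (1 + σ ^ 2))) := by
  have hrw : (fun μ : ℝ => gaussDens (x - μ) * (σ⁻¹ * gaussDens (μ / σ)) * hermiteN j (μ / σ))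
      = fun μ : ℝ => gaussDens (x - μ) * (σ⁻¹ * gaussDens (μ / σ))
          * Polynomial.eval (μ / σ) (Stmt8Aux.Hr j)
          * ((Real.sqrt (Nat.factorial j))⁻¹ * (-1 : ℝ) ^ j) := by
    funext μ
    rw [Stmt8Aux.hermiteN_eq]
    ring
  rw [hrw, MeasureTheory.integral_mul_const, Stmt8Aux.hmain σ hσ j x,
    Stmt8Aux.hermiteN_eq]
  ring
end

section
/- Let φ(s) = (2π)^{-1/2} e^{−s²/2}, σ > 0, g_σ(μ) = σ^{-1} φ(μ/σ), f(x) = (1+σ²)^{-1/2} φ(x/√(1+σ²)), and H_j(s) = (1/√(j!)) e^{s²/2} (d/ds)^j e^{−s²/2}. Then for all integers j, k ≥ 1, ∫_ℝ (∫_ℝ φ(x−μ) g_σ(μ) H_j(μ/σ) dμ)(∫_ℝ φ(x−μ) g_σ(μ) H_k(μ/σ) dμ) f(x)^{-1} dx = δ_{jk} (σ²/(1+σ²))^j. Consequently, in the exponential family g_η(μ) = g_σ(μ) exp[Σ_{j=1}^p η_j H_j(μ/σ) − ψ(η)], the X-sample Fisher information matrix at η = 0 is diagonal with entries (1+σ^{-2})^{-1},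 …, (1+σ^{-2})^{-p}. -/
namespace StmtAux

open Polynomial MeasureTheory Real

/-- The probabilists' Hermite polynomial, over `ℝ`. -/
noncomputable def Hp (n : ℕ) : ℝ[X] := (Polynomial.hermite n).map (Int.castRingHom ℝ)

lemma Hp_zero : Hp 0 = 1 := by
  simp [Hp, Polynomial.hermite_zero]

lemma Hp_one : Hp 1 = X := by
  simp [Hp, Polynomial.hermite_one]

lemma Hp_succ (n : ℕ) : Hp (n + 1) = X * Hp n - derivative (Hp n) := by
  simp [Hp, Polynomial.hermite_succ, Polynomial.map_sub, Polynomial.map_mul,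
    Polynomial.derivative_map]

lemma Hp_deriv (n : ℕ) : derivative (Hp (n + 1)) = C ((n : ℝ) + 1) * Hp n := by
  induction n with
  | zero => simp [Hp_one, Hp_zero]
  | succ n ih =>
      have h2 : derivative (Hp n) = X * Hp n - Hp (n + 1) := by
        rw [Hp_succ n]; ring
      rw [Hp_succ (n + 1), derivative_sub, derivative_mul, derivative_X, one_mul, ih,
        derivative_C_mul, h2, Nat.cast_succ,
        show C ((n : ℝ) + 1 + 1) = C ((n : ℝ) + 1) + 1 by rw [C_add, C_1]]
      ring

lemma aeval_hermite_eq (n : ℕ) (s : ℝ) :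
    (Polynomial.aeval s) (Polynomial.hermite n) = (Hp n).eval s := by
  rw [Hp, eval_map, aeval_def, algebraMap_int_eq]

lemma hermiteN_eq (j : ℕ) (s : ℝ) :
    hermiteN j s = (Real.sqrt (Nat.factorial j))⁻¹ * ((-1 : ℝ) ^ j * (Hp j).eval s) := by
  rw [hermiteN]
  have h0 : (fun u : ℝ => Real.exp (-u ^ 2 / 2)) = fun y : ℝ => Real.exp (-(y ^ 2 / 2)) := by
    funext u; rw [neg_div]
  rw [h0, iteratedDeriv_eq_iterate, Polynomial.deriv_gaussian_eq_hermite_mul_gaussian,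
    aeval_hermite_eq]
  have h1 : Real.exp (s ^ 2 / 2) * Real.exp (-(s ^ 2 / 2)) = 1 := by
    rw [← Real.exp_add]; simp
  calc (Real.sqrt (Nat.factorial j))⁻¹ * Real.exp (s ^ 2 / 2) *
        ((-1 : ℝ) ^ j * (Hp j).eval s * Real.exp (-(s ^ 2 / 2)))
      = (Real.exp (s ^ 2 / 2) * Real.exp (-(s ^ 2 / 2))) *
          ((Real.sqrt (Nat.factorial j))⁻¹ * ((-1 : ℝ) ^ j * (Hp j).eval s)) := by ring
    _ = (Real.sqrt (Nat.factorial j))⁻¹ * ((-1 : ℝ) ^ j * (Hp j).eval s) := by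
          rw [h1, one_mul]

lemma integrable_mono_gauss (n : ℕ) :
    Integrable fun z : ℝ => z ^ n * Real.exp (-z ^ 2 / 2) := by
  have h := integrable_rpow_mul_exp_neg_mul_sq (b := (1 : ℝ) / 2) (by norm_num)
    (s := (n : ℝ)) (by exact lt_of_lt_of_le (by norm_num) (Nat.cast_nonneg n))
  have e : (fun z : ℝ => z ^ ((n : ℝ)) * Real.exp (-(1 / 2) * z ^ 2))
      = fun z : ℝ => z ^ n * Real.exp (-z ^ 2 / 2) := by
    funext z
    rw [Real.rpow_natCast]
    congr 1
    ring
  rwa [e] at h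

lemma integrable_pg (P : ℝ[X]) :
    Integrable fun z : ℝ => P.eval z * Real.exp (-z ^ 2 / 2) := by
  have e : (fun z : ℝ => P.eval z * Real.exp (-z ^ 2 / 2))
      = fun z : ℝ => ∑ i ∈ Finset.range (P.natDegree + 1),
          P.coeff i * (z ^ i * Real.exp (-z ^ 2 / 2)) := by
    funext z
    rw [Polynomial.eval_eq_sum_range, Finset.sum_mul]
    exact Finset.sum_congr rfl fun i _ => by ring
  rw [e]
  exact integrable_finset_sum _ fun i _ => (integrable_mono_gauss i).const_mul _

/-- The (unnormalized) Gaussian integral of a polynomial. -/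
noncomputable def EI (P : ℝ[X]) : ℝ := ∫ z : ℝ, P.eval z * Real.exp (-z ^ 2 / 2)

lemma EI_zero : EI 0 = 0 := by simp [EI]

lemma EI_one : EI 1 = Real.sqrt (2 * Real.pi) := by
  have e : (fun z : ℝ => (1 : ℝ[X]).eval z * Real.exp (-z ^ 2 / 2))
      = fun z : ℝ => Real.exp (-(1 / 2) * z ^ 2) := by
    funext z; rw [eval_one, one_mul]; congr 1; ring
  rw [EI, e, integral_gaussian, show Real.pi / (1 / 2) = 2 * Real.pi by ring]

lemma EI_add (P Q : ℝ[X]) : EI (P + Q) = EI P + EI Q := by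
  rw [EI, EI, EI, ← integral_add (integrable_pg P) (integrable_pg Q)]
  congr 1
  funext z
  rw [eval_add]; ring

lemma EI_sub (P Q : ℝ[X]) : EI (P - Q) = EI P - EI Q := by
  rw [EI, EI, EI, ← integral_sub (integrable_pg P) (integrable_pg Q)]
  congr 1
  funext z
  rw [eval_sub]; ring

lemma EI_C_mul (r : ℝ) (P : ℝ[X]) : EI (C r * P) = r * EI P := by
  rw [EI, EI]
  have e : (fun z : ℝ => (C r * P).eval z * Real.exp (-z ^ 2 / 2))
      = fun z : ℝ => r * (P.eval z * Real.exp (-z ^ 2 / 2)) := by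
    funext z; rw [eval_mul, eval_C]; ring
  rw [e, integral_const_mul]

lemma hasDerivAt_pg (P : ℝ[X]) (z : ℝ) :
    HasDerivAt (fun z : ℝ => P.eval z * Real.exp (-z ^ 2 / 2))
      (((derivative P).eval z - z * P.eval z) * Real.exp (-z ^ 2 / 2)) z := by
  have h1 : HasDerivAt (fun z : ℝ => -z ^ 2 / 2) (-z) z := by
    have h := ((hasDerivAt_pow 2 z).neg.div_const 2)
    refine h.congr_deriv ?_
    simp
    ring
  have h3 := (P.hasDerivAt z).mul h1.exp
  refine h3.congr_deriv ?_
  ring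

lemma EI_X_mul (P : ℝ[X]) : EI (X * P) = EI (derivative P) := by
  have hint : Integrable fun z : ℝ =>
      ((derivative P - X * P).eval z) * Real.exp (-z ^ 2 / 2) := integrable_pg _
  have h0 : ∫ z : ℝ, ((derivative P - X * P).eval z) * Real.exp (-z ^ 2 / 2) = 0 := by
    apply integral_eq_zero_of_hasDerivAt_of_integrable (f := fun z : ℝ =>
      P.eval z * Real.exp (-z ^ 2 / 2)) _ hint (integrable_pg P)
    intro z
    have := hasDerivAt_pg P z
    have e : ((derivative P - X * P).eval z) = (derivative P).eval z - z * P.eval z := by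
      rw [eval_sub, eval_mul, eval_X]
    rw [e]
    exact this
  have h1 : EI (derivative P - X * P) = 0 := h0
  rw [EI_sub] at h1
  linarith

lemma EI_X : EI X = 0 := by
  rw [show (X : ℝ[X]) = X * 1 by ring, EI_X_mul]
  simp [EI_zero]

lemma EI_hermite (k : ℕ) : EI (Hp k) = if k = 0 then Real.sqrt (2 * Real.pi) else 0 := by
  cases k with
  | zero => simp [Hp_zero, EI_one]
  | succ k =>
      rw [if_neg (Nat.succ_ne_zero k), Hp_succ, EI_sub, EI_X_mul, sub_self]

lemma EI_comp_affine (b c y : ℝ) (h : c ^ 2 + b ^ 2 = 1) (n : ℕ) :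
    EI ((Hp n).comp (C (c * y) + C b * X))
      = c ^ n * ((Hp n).eval y) * Real.sqrt (2 * Real.pi) := by
  induction n using Nat.twoStepInduction with
  | zero => simp [Hp_zero, EI_one]
  | one =>
      rw [Hp_one, X_comp, EI_add, EI_C_mul, EI_X]
      have : EI (C (c * y)) = c * y * Real.sqrt (2 * Real.pi) := by
        rw [show (C (c * y) : ℝ[X]) = C (c * y) * 1 by ring, EI_C_mul, EI_one]
      rw [this]
      simp [Hp_one]
  | more n ih ih1 =>
      set q : ℝ[X] := C (c * y) + C b * X with hqdef
      have hq : derivative q = C b := by simp [hqdef]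
      have hcomp : (Hp (n + 2)).comp q
          = C (c * y) * ((Hp (n + 1)).comp q) + C b * (X * ((Hp (n + 1)).comp q))
            - C ((n : ℝ) + 1) * ((Hp n).comp q) := by
        rw [show n + 2 = (n + 1) + 1 by ring, Hp_succ (n + 1), sub_comp, mul_comp, X_comp,
          Hp_deriv n, mul_comp, C_comp]
        ring
      have hdc : derivative ((Hp (n + 1)).comp q)
          = C b * (C ((n : ℝ) + 1) * ((Hp n).comp q)) := by
        rw [derivative_comp, hq, Hp_deriv n, mul_comp, C_comp]
      rw [hcomp, EI_sub, EI_add, EI_C_mul, EI_C_mul, EI_C_mul, EI_X_mul, hdc, EI_C_mul,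
        EI_C_mul, ih, ih1]
      have heval : (Hp (n + 2)).eval y
          = y * (Hp (n + 1)).eval y - ((n : ℝ) + 1) * (Hp n).eval y := by
        rw [show n + 2 = (n + 1) + 1 by ring, Hp_succ (n + 1), eval_sub, eval_mul, eval_X,
          Hp_deriv n, eval_mul, eval_C]
      rw [heval]
      linear_combination (((n : ℝ) + 1) * c ^ n * ((Hp n).eval y) * Real.sqrt (2 * Real.pi)) * h

lemma EI_mul_hermite (j : ℕ) : ∀ k : ℕ, EI (Hp j * Hp k)
    = if j = k then (Nat.factorial j : ℝ) * Real.sqrt (2 * Real.pi) else 0 := by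
  induction j with
  | zero =>
      intro k
      rw [Hp_zero, one_mul, EI_hermite]
      cases k with
      | zero => simp
      | succ k => simp
  | succ j ih =>
      intro k
      have key : EI (Hp (j + 1) * Hp k) = EI (Hp j * derivative (Hp k)) := by
        have h1 : Hp (j + 1) * Hp k = X * (Hp j * Hp k) - derivative (Hp j) * Hp k := by
          rw [Hp_succ]; ring
        rw [h1, EI_sub, EI_X_mul, derivative_mul, EI_add]
        ring
      rw [key]
      cases k with
      | zero =>
          rw [Hp_zero, derivative_one, mul_zero, EI_zero, if_neg (by simp)]
      | succ k =>
          rw [Hp_deriv k, show Hp j * (C ((k : ℝ) + 1) * Hp k)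
              = C ((k : ℝ) + 1) * (Hp j * Hp k) by ring, EI_C_mul, ih k]
          by_cases hjk : j = k
          · subst hjk
            rw [if_pos rfl, if_pos rfl, Nat.factorial_succ]
            push_cast
            ring
          · rw [if_neg hjk, if_neg (fun h => hjk (Nat.succ_injective h)), mul_zero]

lemma gaussDens_pos (s : ℝ) : 0 < gaussDens s := by
  rw [gaussDens]
  have : 0 < Real.sqrt (2 * Real.pi) := Real.sqrt_pos.2 (by positivity)
  positivity

/-- The evaluation of the inner integral. -/
lemma inner_int (σ : ℝ) (hσ : 0 < σ) (j : ℕ) (x : ℝ) :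
    (∫ μ : ℝ, gaussDens (x - μ) * (σ⁻¹ * gaussDens (μ / σ)) * hermiteN j (μ / σ))
      = ((Real.sqrt (1 + σ ^ 2))⁻¹ * gaussDens (x / Real.sqrt (1 + σ ^ 2)))
        * (σ / Real.sqrt (1 + σ ^ 2)) ^ j
        * hermiteN j (x / Real.sqrt (1 + σ ^ 2)) := by
  set τ : ℝ := Real.sqrt (1 + σ ^ 2) with hτdef
  have hτsq : τ ^ 2 = 1 + σ ^ 2 := Real.sq_sqrt (by positivity)
  have hτpos : 0 < τ := Real.sqrt_pos.2 (by positivity)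
  set c : ℝ := σ / τ with hcdef
  have hcpos : 0 < c := by positivity
  have hcsq : c ^ 2 = σ ^ 2 / (1 + σ ^ 2) := by
    rw [hcdef, div_pow, hτsq]
  set b : ℝ := τ⁻¹ with hbdef
  have hcb : c ^ 2 + b ^ 2 = 1 := by
    rw [hcsq, hbdef, inv_pow, hτsq]
    field_simp
    ring
  set m : ℝ := σ ^ 2 * x / (1 + σ ^ 2) with hmdef
  set N : ℝ := (Real.sqrt (Nat.factorial j))⁻¹ * (-1 : ℝ) ^ j with hNdef
  set S2P : ℝ := Real.sqrt (2 * Real.pi) with hS2Pdef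
  have hS2Ppos : 0 < S2P := Real.sqrt_pos.2 (by positivity)
  set K : ℝ := (τ⁻¹ * gaussDens (x / τ)) * S2P⁻¹ * c⁻¹ * N with hKdef
  -- Step 1: pointwise rewriting of the integrand (completing the square).
  have hpt : ∀ μ : ℝ, gaussDens (x - μ) * (σ⁻¹ * gaussDens (μ / σ)) * hermiteN j (μ / σ)
      = K * (Real.exp (-((μ - m) / c) ^ 2 / 2) * (Hp j).eval (μ / σ)) := by
    intro μ
    have hexp : Real.exp (-(x - μ) ^ 2 / 2) * Real.exp (-(μ / σ) ^ 2 / 2)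
        = Real.exp (-(x / τ) ^ 2 / 2) * Real.exp (-((μ - m) / c) ^ 2 / 2) := by
      rw [← Real.exp_add, ← Real.exp_add]
      congr 1
      rw [div_pow, div_pow, div_pow, hτsq, hcsq, hmdef]
      have h1 : (1 : ℝ) + σ ^ 2 ≠ 0 := by positivity
      field_simp
      ring
    have hσinv : σ⁻¹ = τ⁻¹ * c⁻¹ := by
      rw [hcdef]
      field_simp
    simp only [hermiteN_eq, gaussDens, hKdef, hNdef]
    calc S2P⁻¹ * Real.exp (-(x - μ) ^ 2 / 2) * (σ⁻¹ * (S2P⁻¹ * Real.exp (-(μ / σ) ^ 2 / 2)))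
          * ((Real.sqrt (Nat.factorial j))⁻¹ * ((-1 : ℝ) ^ j * (Hp j).eval (μ / σ)))
        = (Real.exp (-(x - μ) ^ 2 / 2) * Real.exp (-(μ / σ) ^ 2 / 2)) *
            (S2P⁻¹ * S2P⁻¹ * σ⁻¹ *
              ((Real.sqrt (Nat.factorial j))⁻¹ * ((-1 : ℝ) ^ j * (Hp j).eval (μ / σ)))) := by
          ring
      _ = (Real.exp (-(x / τ) ^ 2 / 2) * Real.exp (-((μ - m) / c) ^ 2 / 2)) *
            (S2P⁻¹ * S2P⁻¹ * (τ⁻¹ * c⁻¹) *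
              ((Real.sqrt (Nat.factorial j))⁻¹ * ((-1 : ℝ) ^ j * (Hp j).eval (μ / σ)))) := by
          rw [hexp, hσinv]
      _ = τ⁻¹ * (S2P⁻¹ * Real.exp (-(x / τ) ^ 2 / 2)) * S2P⁻¹ * c⁻¹ *
            ((Real.sqrt (Nat.factorial j))⁻¹ * (-1 : ℝ) ^ j) *
            (Real.exp (-((μ - m) / c) ^ 2 / 2) * (Hp j).eval (μ / σ)) := by
          ring
  rw [show (fun μ : ℝ => gaussDens (x - μ) * (σ⁻¹ * gaussDens (μ / σ)) * hermiteN j (μ / σ))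
      = fun μ : ℝ => K * (Real.exp (-((μ - m) / c) ^ 2 / 2) * (Hp j).eval (μ / σ))
      from funext hpt, integral_const_mul]
  -- Step 2: shift by m.
  have hshift : (∫ μ : ℝ, Real.exp (-((μ - m) / c) ^ 2 / 2) * (Hp j).eval (μ / σ))
      = ∫ t : ℝ, Real.exp (-(t / c) ^ 2 / 2) * (Hp j).eval ((t + m) / σ) := by
    rw [← integral_sub_right_eq_self
      (fun t : ℝ => Real.exp (-(t / c) ^ 2 / 2) * (Hp j).eval ((t + m) / σ)) m]
    congr 1
    funext μ
    rw [sub_add_cancel]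
  rw [hshift]
  -- Step 3: scale by c.
  have hscale : (∫ t : ℝ, Real.exp (-(t / c) ^ 2 / 2) * (Hp j).eval ((t + m) / σ))
      = |c| • ∫ z : ℝ, Real.exp (-z ^ 2 / 2) * (Hp j).eval ((c * z + m) / σ) := by
    rw [← MeasureTheory.Measure.integral_comp_div
      (fun z : ℝ => Real.exp (-z ^ 2 / 2) * (Hp j).eval ((c * z + m) / σ)) c]
    congr 1
    funext t
    rw [mul_div_cancel₀ _ (ne_of_gt hcpos)]
  rw [hscale]
  -- Step 4: the affine Mehler-type evaluation.
  have harg : ∀ z : ℝ, (c * z + m) / σ = c * (x / τ) + b * z := by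
    intro z
    rw [hcdef, hmdef, hbdef, ← hτsq]
    field_simp
    ring
  have hmehler : (∫ z : ℝ, Real.exp (-z ^ 2 / 2) * (Hp j).eval ((c * z + m) / σ))
      = c ^ j * ((Hp j).eval (x / τ)) * S2P := by
    have e : (fun z : ℝ => Real.exp (-z ^ 2 / 2) * (Hp j).eval ((c * z + m) / σ))
        = fun z : ℝ => ((Hp j).comp (C (c * (x / τ)) + C b * X)).eval z
            * Real.exp (-z ^ 2 / 2) := by
      funext z
      rw [eval_comp, eval_add, eval_mul, eval_C, eval_C, eval_X, harg z]
      ring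
    rw [e]
    exact EI_comp_affine b c (x / τ) hcb j
  rw [hmehler, hermiteN_eq]
  rw [abs_of_pos hcpos, hKdef, hNdef, smul_eq_mul]
  have hfj : (0 : ℝ) < Real.sqrt (Nat.factorial j) :=
    Real.sqrt_pos.2 (by exact_mod_cast Nat.factorial_pos j)
  have hbτ : b * τ = 1 := by rw [hbdef]; exact inv_mul_cancel₀ hτpos.ne'
  have hS : S2P⁻¹ * S2P = 1 := inv_mul_cancel₀ hS2Ppos.ne'
  have hc : c⁻¹ * c = 1 := inv_mul_cancel₀ hcpos.ne'
  rw [hbdef]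
  linear_combination (τ⁻¹ * gaussDens (x / τ) * c ^ j * (Hp j).eval (x / τ) * (-1 : ℝ) ^ j *
    (Real.sqrt (Nat.factorial j))⁻¹ * (c⁻¹ * c)) * hS +
    (τ⁻¹ * gaussDens (x / τ) * c ^ j * (Hp j).eval (x / τ) * (-1 : ℝ) ^ j *
    (Real.sqrt (Nat.factorial j))⁻¹) * hc

/-- The full Fisher-information integral. -/
lemma outer_int (σ : ℝ) (hσ : 0 < σ) (j k : ℕ) :
    (∫ x : ℝ,
        (∫ μ : ℝ, gaussDens (x - μ) * (σ⁻¹ * gaussDens (μ / σ)) * hermiteN j (μ / σ)) *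
          (∫ μ : ℝ, gaussDens (x - μ) * (σ⁻¹ * gaussDens (μ / σ)) * hermiteN k (μ / σ)) *
          ((Real.sqrt (1 + σ ^ 2))⁻¹ * gaussDens (x / Real.sqrt (1 + σ ^ 2)))⁻¹)
      = if j = k then (σ ^ 2 / (1 + σ ^ 2)) ^ j else 0 := by
  set τ : ℝ := Real.sqrt (1 + σ ^ 2) with hτdef
  have hτsq : τ ^ 2 = 1 + σ ^ 2 := Real.sq_sqrt (by positivity)
  have hτpos : 0 < τ := Real.sqrt_pos.2 (by positivity)
  set c : ℝ := σ / τ with hcdef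
  have hcpos : 0 < c := by positivity
  have hcsq : c ^ 2 = σ ^ 2 / (1 + σ ^ 2) := by rw [hcdef, div_pow, hτsq]
  set S2P : ℝ := Real.sqrt (2 * Real.pi) with hS2Pdef
  have hS2Ppos : 0 < S2P := Real.sqrt_pos.2 (by positivity)
  -- pointwise simplification of the outer integrand
  have hpt : ∀ x : ℝ,
      (∫ μ : ℝ, gaussDens (x - μ) * (σ⁻¹ * gaussDens (μ / σ)) * hermiteN j (μ / σ)) *
        (∫ μ : ℝ, gaussDens (x - μ) * (σ⁻¹ * gaussDens (μ / σ)) * hermiteN k (μ / σ)) *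
        (τ⁻¹ * gaussDens (x / τ))⁻¹
      = c ^ (j + k) *
          (hermiteN j (x / τ) * hermiteN k (x / τ) * (τ⁻¹ * gaussDens (x / τ))) := by
    intro x
    rw [inner_int σ hσ j x, inner_int σ hσ k x]
    have hfω : ((Real.sqrt (1 + σ ^ 2))⁻¹ * gaussDens (x / Real.sqrt (1 + σ ^ 2))) ≠ 0 := by
      have h1 : 0 < Real.sqrt (1 + σ ^ 2) := Real.sqrt_pos.2 (by positivity)
      have h2 := gaussDens_pos (x / Real.sqrt (1 + σ ^ 2))
      positivity
    calc ((Real.sqrt (1 + σ ^ 2))⁻¹ * gaussDens (x / Real.sqrt (1 + σ ^ 2))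
            * (σ / Real.sqrt (1 + σ ^ 2)) ^ j * hermiteN j (x / Real.sqrt (1 + σ ^ 2))) *
          ((Real.sqrt (1 + σ ^ 2))⁻¹ * gaussDens (x / Real.sqrt (1 + σ ^ 2))
            * (σ / Real.sqrt (1 + σ ^ 2)) ^ k * hermiteN k (x / Real.sqrt (1 + σ ^ 2))) *
          ((Real.sqrt (1 + σ ^ 2))⁻¹ * gaussDens (x / Real.sqrt (1 + σ ^ 2)))⁻¹
        = (((Real.sqrt (1 + σ ^ 2))⁻¹ * gaussDens (x / Real.sqrt (1 + σ ^ 2))) *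
            ((Real.sqrt (1 + σ ^ 2))⁻¹ * gaussDens (x / Real.sqrt (1 + σ ^ 2)))⁻¹) *
            (((σ / Real.sqrt (1 + σ ^ 2)) ^ j * (σ / Real.sqrt (1 + σ ^ 2)) ^ k) *
              (hermiteN j (x / Real.sqrt (1 + σ ^ 2)) * hermiteN k (x / Real.sqrt (1 + σ ^ 2)) *
                ((Real.sqrt (1 + σ ^ 2))⁻¹ * gaussDens (x / Real.sqrt (1 + σ ^ 2))))) := by
          ring
      _ = c ^ (j + k) *
          (hermiteN j (x / τ) * hermiteN k (x / τ) * (τ⁻¹ * gaussDens (x / τ))) := by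
          rw [mul_inv_cancel₀ hfω, one_mul, ← pow_add]
  rw [show (fun x : ℝ =>
      (∫ μ : ℝ, gaussDens (x - μ) * (σ⁻¹ * gaussDens (μ / σ)) * hermiteN j (μ / σ)) *
        (∫ μ : ℝ, gaussDens (x - μ) * (σ⁻¹ * gaussDens (μ / σ)) * hermiteN k (μ / σ)) *
        ((Real.sqrt (1 + σ ^ 2))⁻¹ * gaussDens (x / Real.sqrt (1 + σ ^ 2)))⁻¹)
      = fun x : ℝ => c ^ (j + k) *
          (hermiteN j (x / τ) * hermiteN k (x / τ) * (τ⁻¹ * gaussDens (x / τ)))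
      from funext hpt, integral_const_mul]
  -- change of variables x = τ u
  have hcv : (∫ x : ℝ, hermiteN j (x / τ) * hermiteN k (x / τ) * (τ⁻¹ * gaussDens (x / τ)))
      = |τ| • ∫ u : ℝ, hermiteN j u * hermiteN k u * (τ⁻¹ * gaussDens u) :=
    MeasureTheory.Measure.integral_comp_div
      (fun u : ℝ => hermiteN j u * hermiteN k u * (τ⁻¹ * gaussDens u)) τ
  rw [hcv, abs_of_pos hτpos, smul_eq_mul]
  -- evaluate the Hermite orthogonality integral
  have hval : (∫ u : ℝ, hermiteN j u * hermiteN k u * (τ⁻¹ * gaussDens u))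
      = τ⁻¹ * S2P⁻¹ * ((Real.sqrt (Nat.factorial j))⁻¹ * (Real.sqrt (Nat.factorial k))⁻¹
          * ((-1 : ℝ) ^ (j + k)) * EI (Hp j * Hp k)) := by
    have e : (fun u : ℝ => hermiteN j u * hermiteN k u * (τ⁻¹ * gaussDens u))
        = fun u : ℝ => (τ⁻¹ * S2P⁻¹ * ((Real.sqrt (Nat.factorial j))⁻¹
            * (Real.sqrt (Nat.factorial k))⁻¹ * ((-1 : ℝ) ^ (j + k))))
            * ((Hp j * Hp k).eval u * Real.exp (-u ^ 2 / 2)) := by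
      funext u
      rw [hermiteN_eq, hermiteN_eq, gaussDens, eval_mul, pow_add]
      ring
    rw [e, integral_const_mul, EI]
    ring
  rw [hval, EI_mul_hermite j k]
  by_cases hjk : j = k
  · subst hjk
    rw [if_pos rfl, if_pos rfl]
    have hfle : (Real.sqrt (Nat.factorial j))⁻¹ * (Real.sqrt (Nat.factorial j))⁻¹
        * (Nat.factorial j : ℝ) = 1 := by
      have h0 : (0 : ℝ) < (Nat.factorial j : ℝ) := by exact_mod_cast Nat.factorial_pos j
      rw [← mul_inv, Real.mul_self_sqrt h0.le, inv_mul_cancel₀ h0.ne']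
    have hsgn : ((-1 : ℝ)) ^ (j + j) = 1 := by
      rw [pow_add, ← pow_add]
      exact Even.neg_one_pow ⟨j, rfl⟩
    have hpow : c ^ (j + j) = (σ ^ 2 / (1 + σ ^ 2)) ^ j := by
      rw [← hcsq, ← pow_mul, two_mul]
    calc c ^ (j + j) * (τ * (τ⁻¹ * S2P⁻¹ *
          ((Real.sqrt (Nat.factorial j))⁻¹ * (Real.sqrt (Nat.factorial j))⁻¹
            * ((-1 : ℝ) ^ (j + j)) * ((Nat.factorial j : ℝ) * S2P))))
        = c ^ (j + j) * ((τ * τ⁻¹) * (S2P⁻¹ * S2P) *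
            ((Real.sqrt (Nat.factorial j))⁻¹ * (Real.sqrt (Nat.factorial j))⁻¹
              * (Nat.factorial j : ℝ)) * ((-1 : ℝ) ^ (j + j))) := by ring
      _ = (σ ^ 2 / (1 + σ ^ 2)) ^ j := by
          rw [mul_inv_cancel₀ (ne_of_gt hτpos), inv_mul_cancel₀ (ne_of_gt hS2Ppos), hfle,
            hsgn, hpow]
          ring
  · rw [if_neg hjk, if_neg hjk]
    ring

end StmtAux

/-- The diagonal Fisher information computation of Theorem 2: with the Gaussian carrier
`g(μ) = σ⁻¹φ(μ/σ)` and marginal `f(x) = (1+σ²)^{-1/2}φ(x/√(1+σ²))`, for all `j,k ≥ 1`,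
`∫ (∫ φ(x−μ) g(μ) H_j(μ/σ) dμ)(∫ φ(x−μ) g(μ) H_k(μ/σ) dμ) f(x)⁻¹ dx
   = δ_{jk} (σ²/(1+σ²))^j`.
Consequently, in the exponential family with statistics `H_1(μ/σ), …, H_p(μ/σ)`, the
`X`-sample Fisher information matrix at `η = 0` is diagonal with entries
`(1+σ⁻²)⁻¹, …, (1+σ⁻²)⁻ᵖ`. -/
theorem stmt_10 (σ : ℝ) (hσ : 0 < σ) (p : ℕ)
    (g f : ℝ → ℝ)
    (hg : ∀ μ, g μ = σ⁻¹ * gaussDens (μ / σ))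
    (hf : ∀ x, f x = (Real.sqrt (1 + σ ^ 2))⁻¹ * gaussDens (x / Real.sqrt (1 + σ ^ 2))) :
    (∀ j k : ℕ, 1 ≤ j → 1 ≤ k →
      ∫ x : ℝ,
          (∫ μ : ℝ, gaussDens (x - μ) * g μ * hermiteN j (μ / σ)) *
            (∫ μ : ℝ, gaussDens (x - μ) * g μ * hermiteN k (μ / σ)) * (f x)⁻¹
        = if j = k then (σ ^ 2 / (1 + σ ^ 2)) ^ j else 0) ∧
    (Matrix.of (fun j k : Fin p =>
        ∫ x : ℝ,
          (∫ μ : ℝ, gaussDens (x - μ) * g μ * hermiteN (j.1 + 1) (μ / σ)) *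
            (∫ μ : ℝ, gaussDens (x - μ) * g μ * hermiteN (k.1 + 1) (μ / σ)) * (f x)⁻¹)
      = Matrix.diagonal (fun j : Fin p => ((1 + σ⁻¹ ^ 2)⁻¹) ^ (j.1 + 1))) := by
  have key : ∀ j k : ℕ,
      (∫ x : ℝ,
          (∫ μ : ℝ, gaussDens (x - μ) * g μ * hermiteN j (μ / σ)) *
            (∫ μ : ℝ, gaussDens (x - μ) * g μ * hermiteN k (μ / σ)) * (f x)⁻¹)
        = if j = k then (σ ^ 2 / (1 + σ ^ 2)) ^ j else 0 := by
    intro j k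
    have e : ∀ n : ℕ, (fun x : ℝ =>
        (∫ μ : ℝ, gaussDens (x - μ) * g μ * hermiteN n (μ / σ)))
        = fun x : ℝ => (∫ μ : ℝ, gaussDens (x - μ) * (σ⁻¹ * gaussDens (μ / σ))
            * hermiteN n (μ / σ)) := by
      intro n
      funext x
      congr 1
      funext μ
      rw [hg μ]
    calc (∫ x : ℝ,
          (∫ μ : ℝ, gaussDens (x - μ) * g μ * hermiteN j (μ / σ)) *
            (∫ μ : ℝ, gaussDens (x - μ) * g μ * hermiteN k (μ / σ)) * (f x)⁻¹)
        = (∫ x : ℝ,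
          (∫ μ : ℝ, gaussDens (x - μ) * (σ⁻¹ * gaussDens (μ / σ)) * hermiteN j (μ / σ)) *
            (∫ μ : ℝ, gaussDens (x - μ) * (σ⁻¹ * gaussDens (μ / σ)) * hermiteN k (μ / σ)) *
            ((Real.sqrt (1 + σ ^ 2))⁻¹ * gaussDens (x / Real.sqrt (1 + σ ^ 2)))⁻¹) := by
          congr 1
          funext x
          rw [congrFun (e j) x, congrFun (e k) x, hf x]
      _ = if j = k then (σ ^ 2 / (1 + σ ^ 2)) ^ j else 0 := StmtAux.outer_int σ hσ j k
  constructor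
  · intro j k _ _
    exact key j k
  · have hconst : (1 + σ⁻¹ ^ 2)⁻¹ = σ ^ 2 / (1 + σ ^ 2) := by
      have h1 : (1 : ℝ) + σ ^ 2 ≠ 0 := by positivity
      field_simp
      ring
    ext i k
    rw [Matrix.of_apply, key (i.1 + 1) (k.1 + 1), Matrix.diagonal_apply, hconst]
    by_cases hik : i = k
    · subst hik
      simp
    · rw [if_neg hik, if_neg (fun h => hik (Fin.ext (Nat.succ_injective h)))]
end

section
/- Let σ > 0 and κ > 1, and set r = √(1+σ²)/σ (so r² = (1+σ²)/σ² and 1/(r²−1) = σ²). Suppose C > 0 is such that p := ⌈log(C/σ)/log(rκ)⌉ − 1 satisfies p ≥ 2. Then Σ_{j=1}^{p} r^{2j} + C² κ^{−2(p+1)} ≤ (1 + r²) · σ^{2 log κ/(log r + log κ)} · C^{2 log r/(log r + log κ)}. -/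
set_option maxHeartbeats 1000000


/-- The key inequality in the proof of Lemma 4: for `σ > 0`, `κ > 1`,
`r = √(1+σ²)/σ`, and `C > 0` such that `p = ⌈log(C/σ)/log(rκ)⌉ − 1` satisfies `p ≥ 2`,
`Σ_{j=1}^p r^{2j} + C² κ^{−2(p+1)}
   ≤ (1+r²) · σ^{2 log κ/(log r + log κ)} · C^{2 log r/(log r + log κ)}`.
The powers of `σ` and `C` on the right-hand side are real (rpow) powers. -/
theorem stmt_16 (σ κ : ℝ) (hσ : 0 < σ) (hκ : 1 < κ)
    (r : ℝ) (hr : r = Real.sqrt (1 + σ ^ 2) / σ)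
    (C : ℝ) (hC : 0 < C)
    (p : ℕ) (hp : 2 ≤ p)
    (hpdef : (p : ℤ) = ⌈Real.log (C / σ) / Real.log (r * κ)⌉ - 1) :
    (∑ j ∈ Finset.Icc 1 p, r ^ (2 * j)) + C ^ 2 * (κ ^ (2 * (p + 1)))⁻¹
      ≤ (1 + r ^ 2) *
          σ ^ (2 * Real.log κ / (Real.log r + Real.log κ) : ℝ) *
          C ^ (2 * Real.log r / (Real.log r + Real.log κ) : ℝ) := by
  have key : ∀ a : ℝ, 0 < a → ∀ n : ℕ, a ^ n = Real.exp (n * Real.log a) := by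
    intro a ha n; rw [Real.exp_nat_mul, Real.exp_log ha]
  have hσ2 : (0:ℝ) < σ ^ 2 := by positivity
  have hsq : Real.sqrt (1 + σ ^ 2) > σ := by
    have : Real.sqrt (σ ^ 2) < Real.sqrt (1 + σ ^ 2) :=
      Real.sqrt_lt_sqrt (le_of_lt hσ2) (by linarith)
    rwa [Real.sqrt_sq hσ.le] at this
  have hr1 : 1 < r := by
    rw [hr]; rw [lt_div_iff₀ hσ]; simpa using hsq
  have hr0 : 0 < r := lt_trans one_pos hr1
  have hr2 : r ^ 2 = (1 + σ ^ 2) / σ ^ 2 := by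
    rw [hr, div_pow, Real.sq_sqrt (by positivity)]
  have hr2m1 : σ ^ 2 * (r ^ 2 - 1) = 1 := by
    rw [hr2, mul_sub, mul_div_assoc', mul_div_cancel_left₀ _ hσ2.ne']; ring
  have hlr : 0 < Real.log r := Real.log_pos hr1
  have hlk : 0 < Real.log κ := Real.log_pos hκ
  set lr := Real.log r with hlrdef
  set lk := Real.log κ with hlkdef
  set L := lr + lk with hLdef
  have hL : 0 < L := by positivity
  set x := Real.log (C / σ) / L with hxdef
  have hlogCσ : Real.log (C / σ) = Real.log C - Real.log σ :=
    Real.log_div hC.ne' hσ.ne'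
  have hκ0 : (0:ℝ) < κ := lt_trans one_pos hκ
  have hlogrk : Real.log (r * κ) = L := by
    rw [Real.log_mul hr0.ne' hκ0.ne']
  have hxeq : Real.log (C / σ) / Real.log (r * κ) = x := by
    rw [hlogrk]
  have hceil : (⌈x⌉ : ℤ) = (p : ℤ) + 1 := by rw [← hxeq]; omega
  have hxceil : x ≤ (p : ℝ) + 1 := by
    have h := Int.le_ceil x
    rw [hceil] at h; push_cast at h; exact h
  have hpx : (p : ℝ) ≤ x := by
    have h2 := Int.ceil_lt_add_one x
    rw [hceil] at h2; push_cast at h2; linarith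
  have hxL : x * L = Real.log C - Real.log σ := by
    rw [hxdef, div_mul_cancel₀ _ hL.ne', hlogCσ]
  set D := σ ^ 2 * r ^ (2 * x : ℝ) with hDdef
  have hD0 : 0 < D := by
    have := Real.rpow_pos_of_pos hr0 (2 * x)
    positivity
  have hDe : D = Real.exp (2 * Real.log σ + lr * (2 * x)) := by
    rw [hDdef, Real.rpow_def_of_pos hr0, key σ hσ 2, ← Real.exp_add]
    norm_num
    exact Or.inl hlrdef.symm
  -- Step C : RHS factor equals D
  have hRHS : σ ^ (2 * lk / L : ℝ) * C ^ (2 * lr / L : ℝ) = D := by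
    rw [Real.rpow_def_of_pos hσ, Real.rpow_def_of_pos hC, hDe, ← Real.exp_add]
    congr 1
    have hx2 : x = (Real.log C - Real.log σ) / L := by rw [hxdef, hlogCσ]
    rw [hx2]
    field_simp
    ring
  -- Step A : second term ≤ D
  have hκp : (0:ℝ) < κ ^ (2 * (p + 1)) := by positivity
  have hA : C ^ 2 * (κ ^ (2 * (p + 1)))⁻¹ ≤ D := by
    rw [← div_eq_mul_inv, div_le_iff₀ hκp]
    rw [key C hC 2, key κ hκ0 (2 * (p + 1)), hDe, ← Real.exp_add, Real.exp_le_exp]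
    have h1 : 0 ≤ lk * ((p:ℝ) + 1 - x) := mul_nonneg hlk.le (by linarith)
    push_cast
    nlinarith
  -- Step B : sum ≤ r² * D
  have hsum : (∑ j ∈ Finset.Icc 1 p, r ^ (2 * j)) ≤ r ^ 2 * D := by
    have hgeom : (∑ j ∈ Finset.Icc 1 p, r ^ (2 * j)) * (r ^ 2 - 1)
        = r ^ (2 * (p + 1)) - r ^ 2 := by
      have h := geom_sum_Ico_mul (r ^ 2) (m := 1) (n := p + 1) (by omega)
      rw [← Finset.Ico_add_one_right_eq_Icc]
      calc (∑ j ∈ Finset.Ico 1 (p+1), r ^ (2 * j)) * (r ^ 2 - 1)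
          = (∑ j ∈ Finset.Ico 1 (p+1), (r ^ 2) ^ j) * (r ^ 2 - 1) := by
            congr 1; apply Finset.sum_congr rfl; intro j _; rw [← pow_mul]
        _ = (r ^ 2) ^ (p + 1) - (r ^ 2) ^ 1 := h
        _ = r ^ (2 * (p + 1)) - r ^ 2 := by rw [← pow_mul]; ring
    have hr2gt : (0:ℝ) < r ^ 2 - 1 := by nlinarith
    have hS : (∑ j ∈ Finset.Icc 1 p, r ^ (2 * j)) ≤ σ ^ 2 * r ^ (2 * (p + 1)) := by
      have hmul : (∑ j ∈ Finset.Icc 1 p, r ^ (2 * j)) * (r ^ 2 - 1)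
          ≤ (σ ^ 2 * r ^ (2 * (p + 1))) * (r ^ 2 - 1) := by
        rw [hgeom]
        nlinarith [pow_pos hr0 (2 * (p+1))]
      exact le_of_mul_le_mul_right hmul hr2gt
    refine hS.trans ?_
    have hpow : (r : ℝ) ^ (2 * (p + 1)) ≤ Real.exp (lr * (2 * x) + 2 * lr) := by
      rw [key r hr0 (2 * (p + 1)), Real.exp_le_exp]
      push_cast
      nlinarith
    calc σ ^ 2 * r ^ (2 * (p + 1)) ≤ σ ^ 2 * Real.exp (lr * (2 * x) + 2 * lr) :=
          mul_le_mul_of_nonneg_left hpow hσ2.le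
      _ = r ^ 2 * D := by
          rw [hDe, key σ hσ 2, key r hr0 2, ← Real.exp_add, ← Real.exp_add]
          norm_num; ring_nf
          linarith [hlrdef]
  calc (∑ j ∈ Finset.Icc 1 p, r ^ (2 * j)) + C ^ 2 * (κ ^ (2 * (p + 1)))⁻¹
      ≤ r ^ 2 * D + D := add_le_add hsum hA
    _ = (1 + r ^ 2) * D := by ring
    _ = (1 + r ^ 2) * (σ ^ (2 * lk / L : ℝ) * C ^ (2 * lr / L : ℝ)) := by rw [hRHS]
    _ = (1 + r ^ 2) * σ ^ (2 * lk / L : ℝ) * C ^ (2 * lr / L : ℝ) := by ring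
end

section
/- Let Ω ⊂ ℝ be a compact interval, K : Ω×Ω → (0,∞) a continuous symmetric kernel with ∫_Ω K(μ,x) dx = 1 for every μ ∈ Ω, and g₀ : Ω → (0,∞) a continuous probability density; set f₀(x) = ∫_Ω K(μ,x) g₀(μ) dμ and P_{g₀}(μ₁,μ₂) = ∫_Ω √(g₀(μ₁)) K(μ₁,x) f₀(x)^{-1} K(x,μ₂) √(g₀(μ₂)) dx. Suppose T_j, T_{j'} : Ω → ℝ are such that ζ_j = T_j·√g₀ and ζ_{j'} = T_{j'}·√g₀ are orthonormal in L²(Ω) and satisfy ∫_Ω P_{g₀}(μ₁,μ₂) ζ_j(μ₂) dμ₂ = ρ_j ζ_j(μ₁) and ∫_Ω P_{g₀}(μ₁,μ₂) ζ_{j'}(μ₂) dμ₂ = ρ_{j'} ζ_{j'}(μ₁) with ρ_j, ρ_{j'} > 0. Define U_j(x) = (∫_Ω K(x,μ) T_j(μ) g₀(μ) dμ)/f₀(x) and similarly U_{j'}. Then ∫_Ω U_j(x) U_{j'}(x) f₀(x) dx = δ_{jj'} ρ_j. -/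
open MeasureTheory

private lemma aux_mul_le_mul5 {a1 b1 a2 b2 a3 b3 a4 b4 a5 b5 : ℝ}
    (p1 : 0 ≤ a1) (p2 : 0 ≤ a2) (p3 : 0 ≤ a3) (p4 : 0 ≤ a4) (p5 : 0 ≤ a5)
    (h1 : a1 ≤ b1) (h2 : a2 ≤ b2) (h3 : a3 ≤ b3) (h4 : a4 ≤ b4) (h5 : a5 ≤ b5) :
    a1 * a2 * a3 * a4 * a5 ≤ b1 * b2 * b3 * b4 * b5 := by
  have q1 := p1.trans h1; have q2 := p2.trans h2; have q3 := p3.trans h3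
  have q4 := p4.trans h4
  have h12 : a1 * a2 ≤ b1 * b2 := mul_le_mul h1 h2 p2 q1
  have h123 : a1 * a2 * a3 ≤ b1 * b2 * b3 :=
    mul_le_mul h12 h3 p3 (mul_nonneg q1 q2)
  have h1234 : a1 * a2 * a3 * a4 ≤ b1 * b2 * b3 * b4 :=
    mul_le_mul h123 h4 p4 (mul_nonneg (mul_nonneg q1 q2) q3)
  exact mul_le_mul h1234 h5 p5 (mul_nonneg (mul_nonneg (mul_nonneg q1 q2) q3) q4)

private lemma aux_mul_le_mul4 {a1 b1 a2 b2 a3 b3 a4 b4 : ℝ}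
    (p1 : 0 ≤ a1) (p2 : 0 ≤ a2) (p3 : 0 ≤ a3) (p4 : 0 ≤ a4)
    (h1 : a1 ≤ b1) (h2 : a2 ≤ b2) (h3 : a3 ≤ b3) (h4 : a4 ≤ b4) :
    a1 * a2 * a3 * a4 ≤ b1 * b2 * b3 * b4 := by
  have q1 := p1.trans h1; have q2 := p2.trans h2; have q3 := p3.trans h3
  have h12 : a1 * a2 ≤ b1 * b2 := mul_le_mul h1 h2 p2 q1
  have h123 : a1 * a2 * a3 ≤ b1 * b2 * b3 :=
    mul_le_mul h12 h3 p3 (mul_nonneg q1 q2)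
  exact mul_le_mul h123 h4 p4 (mul_nonneg (mul_nonneg q1 q2) q3)

private lemma aux_abs_le_one_add_mul_self (t : ℝ) : ‖t‖ ≤ 1 + t * t := by
  rw [Real.norm_eq_abs]
  nlinarith [sq_nonneg (|t| - 1), abs_nonneg t, sq_abs t]

/-- The covariance computation in the proof of Lemma 6: if `ζ_j = T_j √g₀` and
`ζ_{j'} = T_{j'} √g₀` are orthonormal eigenfunctions of the deconvolution operator
`P_{g₀}` with positive eigenvalues `ρ_j, ρ_{j'}`, and
`U_j(x) = (∫ K(x,μ) T_j(μ) g₀(μ) dμ)/f₀(x)`, then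
`∫ U_j(x) U_{j'}(x) f₀(x) dx = δ_{jj'} ρ_j`. -/
theorem stmt_17 (a b : ℝ) (hab : a < b)
    (K : ℝ → ℝ → ℝ) (g₀ : ℝ → ℝ)
    (hK : ContinuousOn (fun q : ℝ × ℝ => K q.1 q.2) (Set.Icc a b ×ˢ Set.Icc a b))
    (hKpos : ∀ μ ∈ Set.Icc a b, ∀ x ∈ Set.Icc a b, 0 < K μ x)
    (hKsymm : ∀ μ x, K μ x = K x μ)
    (hKint : ∀ μ ∈ Set.Icc a b, ∫ x in Set.Icc a b, K μ x = 1)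
    (hg₀ : ContinuousOn g₀ (Set.Icc a b))
    (hg₀pos : ∀ μ ∈ Set.Icc a b, 0 < g₀ μ)
    (hg₀int : ∫ μ in Set.Icc a b, g₀ μ = 1)
    (f₀ : ℝ → ℝ)
    (hf₀ : ∀ x, f₀ x = ∫ μ in Set.Icc a b, K μ x * g₀ μ)
    (P : ℝ → ℝ → ℝ)
    (hP : ∀ μ₁ μ₂, P μ₁ μ₂ =
      ∫ x in Set.Icc a b,
        Real.sqrt (g₀ μ₁) * K μ₁ x * (f₀ x)⁻¹ * K x μ₂ * Real.sqrt (g₀ μ₂))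
    (T : ℕ → ℝ → ℝ) (ρ : ℕ → ℝ) (j j' : ℕ)
    (horth : ∀ i i' : ℕ, (i = j ∨ i = j') → (i' = j ∨ i' = j') →
      ∫ μ in Set.Icc a b,
        (T i μ * Real.sqrt (g₀ μ)) * (T i' μ * Real.sqrt (g₀ μ))
          = if i = i' then 1 else 0)
    (heig : ∀ i : ℕ, (i = j ∨ i = j') → ∀ μ₁ ∈ Set.Icc a b,
      ∫ μ₂ in Set.Icc a b, P μ₁ μ₂ * (T i μ₂ * Real.sqrt (g₀ μ₂))
        = ρ i * (T i μ₁ * Real.sqrt (g₀ μ₁)))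
    (hρpos : ∀ i : ℕ, (i = j ∨ i = j') → 0 < ρ i)
    (U : ℕ → ℝ → ℝ)
    (hU : ∀ i x, U i x = (∫ μ in Set.Icc a b, K x μ * T i μ * g₀ μ) / f₀ x) :
    ∫ x in Set.Icc a b, U j x * U j' x * f₀ x = if j = j' then ρ j else 0 := by
  set S : Set ℝ := Set.Icc a b with hSdef
  have hSm : MeasurableSet S := measurableSet_Icc
  have hSc : IsCompact S := isCompact_Icc
  have hSne : S.Nonempty := Set.nonempty_Icc.2 hab.le
  have hvolS : volume S = ENNReal.ofReal (b - a) := Real.volume_Icc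
  have hvolS_ne : volume S ≠ ⊤ := by rw [hvolS]; exact ENNReal.ofReal_ne_top
  have hvolS_toReal : (volume S).toReal = b - a := by
    rw [hvolS, ENNReal.toReal_ofReal (by linarith)]
  haveI : IsFiniteMeasure (volume.restrict S) :=
    ⟨by rw [Measure.restrict_apply_univ]; exact lt_of_le_of_ne le_top hvolS_ne⟩
  -- bounds on K
  obtain ⟨Km, hKm⟩ := (hSc.prod hSc).exists_bound_of_continuousOn hK
  have hKm' : ∀ μ ∈ S, ∀ x ∈ S, K μ x ≤ Km := by
    intro μ hμ x hx; have := hKm (μ, x) ⟨hμ, hx⟩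
    exact (le_abs_self _).trans (by simpa [Real.norm_eq_abs] using this)
  obtain ⟨pK, hpK, hpKmin⟩ := (hSc.prod hSc).exists_isMinOn (hSne.prod hSne) hK
  set Kmin : ℝ := K pK.1 pK.2 with hKmindef
  have hKminpos : 0 < Kmin := hKpos _ hpK.1 _ hpK.2
  have hKmin : ∀ μ ∈ S, ∀ x ∈ S, Kmin ≤ K μ x := by
    intro μ hμ x hx; exact isMinOn_iff.1 hpKmin (μ, x) ⟨hμ, hx⟩
  -- bounds on g₀
  obtain ⟨pg, hpg, hpgmin⟩ := hSc.exists_isMinOn hSne hg₀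
  set gmin : ℝ := g₀ pg with hgmindef
  have hgminpos : 0 < gmin := hg₀pos _ hpg
  have hgmin : ∀ μ ∈ S, gmin ≤ g₀ μ := fun μ hμ => isMinOn_iff.1 hpgmin μ hμ
  obtain ⟨gmax, hgmax'⟩ := hSc.exists_bound_of_continuousOn hg₀
  have hgmax : ∀ μ ∈ S, g₀ μ ≤ gmax := by
    intro μ hμ
    exact (le_abs_self _).trans (by simpa [Real.norm_eq_abs] using hgmax' μ hμ)
  have hgmaxpos : 0 < gmax := lt_of_lt_of_le hgminpos (hgmin _ hpg |>.trans (hgmax _ hpg))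
  have hsqgmax : ∀ μ ∈ S, Real.sqrt (g₀ μ) ≤ Real.sqrt gmax :=
    fun μ hμ => Real.sqrt_le_sqrt (hgmax μ hμ)
  have hsqgpos : ∀ μ ∈ S, 0 < Real.sqrt (g₀ μ) :=
    fun μ hμ => Real.sqrt_pos.2 (hg₀pos μ hμ)
  -- continuity sections of K
  have hKcont1 : ∀ μ ∈ S, ContinuousOn (fun x => K μ x) S := by
    intro μ hμ
    exact hK.comp (continuous_const.prodMk continuous_id).continuousOn
      (fun x hx => ⟨hμ, hx⟩)
  have hKcont2 : ∀ μ ∈ S, ContinuousOn (fun x => K x μ) S := by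
    intro μ hμ
    exact hK.comp (continuous_id.prodMk continuous_const).continuousOn
      (fun x hx => ⟨hx, hμ⟩)
  -- basic a.e. strong measurability
  have hKpair_aesm : AEStronglyMeasurable (fun p : ℝ × ℝ => K p.1 p.2)
      ((volume.restrict S).prod (volume.restrict S)) := by
    rw [Measure.prod_restrict]
    exact hK.aestronglyMeasurable (hSm.prod hSm)
  have hKpair_aesm' : AEStronglyMeasurable (fun p : ℝ × ℝ => K p.2 p.1)
      ((volume.restrict S).prod (volume.restrict S)) := by
    have : (fun p : ℝ × ℝ => K p.2 p.1) = fun p : ℝ × ℝ => K p.1 p.2 :=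
      funext fun p => hKsymm p.2 p.1
    rw [this]; exact hKpair_aesm
  have hg_aesm : AEStronglyMeasurable g₀ (volume.restrict S) :=
    hg₀.aestronglyMeasurable hSm
  have hsqg_aesm : AEStronglyMeasurable (fun μ => Real.sqrt (g₀ μ)) (volume.restrict S) :=
    (Real.continuous_sqrt.comp_continuousOn hg₀).aestronglyMeasurable hSm
  -- f₀ : measurability and bounds
  have hf₀fun : f₀ = fun x => ∫ y, (fun p : ℝ × ℝ => K p.2 p.1 * g₀ p.2) (x, y)
      ∂(volume.restrict S) := funext fun x => hf₀ x
  have hf₀_aesm : AEStronglyMeasurable f₀ (volume.restrict S) := by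
    rw [hf₀fun]
    exact (hKpair_aesm'.mul
      (hg_aesm.comp_quasiMeasurePreserving Measure.quasiMeasurePreserving_snd)).integral_prod_right'
  have hf₀inv_aesm : AEStronglyMeasurable (fun x => (f₀ x)⁻¹) (volume.restrict S) :=
    (hf₀_aesm.aemeasurable.inv).aestronglyMeasurable
  have hf₀integrand_int : ∀ x ∈ S, IntegrableOn (fun μ => K μ x * g₀ μ) S := by
    intro x hx
    exact ((hKcont2 x hx).mul hg₀).integrableOn_compact hSc
  set fl : ℝ := Kmin * gmin * (b - a) with hfldef
  have hflpos : 0 < fl := mul_pos (mul_pos hKminpos hgminpos) (by linarith)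
  set fu : ℝ := Km * gmax * (b - a) with hfudef
  have hf₀lb : ∀ x ∈ S, fl ≤ f₀ x := by
    intro x hx
    rw [hf₀ x]
    calc fl = (Kmin * gmin) * (volume S).toReal := by rw [hvolS_toReal]
    _ ≤ ∫ μ in S, K μ x * g₀ μ := by
        apply setIntegral_ge_of_const_le_real hSm hvolS_ne
        · intro μ hμ
          exact mul_le_mul (hKmin μ hμ x hx) (hgmin μ hμ) hgminpos.le
            (le_trans hKminpos.le (hKmin μ hμ x hx))
        · exact hf₀integrand_int x hx
  have hf₀pos : ∀ x ∈ S, 0 < f₀ x := fun x hx => lt_of_lt_of_le hflpos (hf₀lb x hx)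
  have hf₀ub : ∀ x ∈ S, f₀ x ≤ fu := by
    intro x hx
    rw [hf₀ x]
    calc ∫ μ in S, K μ x * g₀ μ ≤ ∫ _μ in S, Km * gmax := by
          apply setIntegral_mono_on (hf₀integrand_int x hx)
            (integrableOn_const hvolS_ne) hSm
          intro μ hμ
          exact mul_le_mul (hKm' μ hμ x hx) (hgmax μ hμ) (hg₀pos μ hμ).le
            (le_trans hKminpos.le (hKm' pK.1 hpK.1 pK.2 hpK.2))
    _ = (Km * gmax) * (volume S).toReal := by rw [setIntegral_const, smul_eq_mul, measureReal_def]; ring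
    _ = fu := by rw [hvolS_toReal]
  have hfupos : 0 < fu := lt_of_lt_of_le hflpos ((hf₀lb _ hSne.some_mem).trans (hf₀ub _ hSne.some_mem))
  have hf₀inv_lb : ∀ x ∈ S, fu⁻¹ ≤ (f₀ x)⁻¹ := by
    intro x hx
    exact inv_anti₀ (hf₀pos x hx) (hf₀ub x hx)
  have hf₀inv_ub : ∀ x ∈ S, (f₀ x)⁻¹ ≤ fl⁻¹ := by
    intro x hx
    exact inv_anti₀ hflpos (hf₀lb x hx)
  -- the P kernel: measurability in second argument and positivity on S × S
  set cl : ℝ := Real.sqrt gmin * Kmin * fu⁻¹ * Kmin * Real.sqrt gmin with hcldef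
  have hclpos : 0 < cl := by
    have := Real.sqrt_pos.2 hgminpos
    have := inv_pos.2 hfupos
    positivity
  have hsqgmin : ∀ μ ∈ S, Real.sqrt gmin ≤ Real.sqrt (g₀ μ) :=
    fun μ hμ => Real.sqrt_le_sqrt (hgmin μ hμ)
  have hPintegrand_int : ∀ μ₁ ∈ S, ∀ μ₂ ∈ S,
      IntegrableOn (fun x => Real.sqrt (g₀ μ₁) * K μ₁ x * (f₀ x)⁻¹ * K x μ₂ *
        Real.sqrt (g₀ μ₂)) S := by
    intro μ₁ hμ₁ μ₂ hμ₂
    have haesm : AEStronglyMeasurable (fun x => Real.sqrt (g₀ μ₁) * K μ₁ x * (f₀ x)⁻¹ *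
        K x μ₂ * Real.sqrt (g₀ μ₂)) (volume.restrict S) :=
      ((((aestronglyMeasurable_const.mul
        (((hKcont1 μ₁ hμ₁)).aestronglyMeasurable hSm)).mul hf₀inv_aesm).mul
        (((hKcont2 μ₂ hμ₂)).aestronglyMeasurable hSm)).mul aestronglyMeasurable_const)
    apply Integrable.mono' (integrable_const
      (Real.sqrt gmax * Km * fl⁻¹ * Km * Real.sqrt gmax)) haesm
    filter_upwards [ae_restrict_mem hSm] with x hx
    rw [Real.norm_eq_abs, abs_of_nonneg (by
      have := (hsqgpos μ₁ hμ₁).le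
      have := (hsqgpos μ₂ hμ₂).le
      have := (hKpos μ₁ hμ₁ x hx).le
      have := (hKpos x hx μ₂ hμ₂).le
      have := (inv_pos.2 (hf₀pos x hx)).le
      positivity)]
    exact aux_mul_le_mul5 (hsqgpos μ₁ hμ₁).le (hKpos μ₁ hμ₁ x hx).le
      (inv_pos.2 (hf₀pos x hx)).le (hKpos x hx μ₂ hμ₂).le (hsqgpos μ₂ hμ₂).le
      (hsqgmax μ₁ hμ₁) (hKm' μ₁ hμ₁ x hx) (hf₀inv_ub x hx) (hKm' x hx μ₂ hμ₂)
      (hsqgmax μ₂ hμ₂)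
  have hPpos : ∀ μ₁ ∈ S, ∀ μ₂ ∈ S, 0 < P μ₁ μ₂ := by
    intro μ₁ hμ₁ μ₂ hμ₂
    rw [hP]
    have : cl * (volume S).toReal ≤ ∫ x in S,
        Real.sqrt (g₀ μ₁) * K μ₁ x * (f₀ x)⁻¹ * K x μ₂ * Real.sqrt (g₀ μ₂) := by
      apply setIntegral_ge_of_const_le_real hSm hvolS_ne
      · intro x hx
        have h1 := hKmin μ₁ hμ₁ x hx
        have h2 := hKmin x hx μ₂ hμ₂
        have h3 := hf₀inv_lb x hx
        have h4 := hsqgmin μ₁ hμ₁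
        have h5 := hsqgmin μ₂ hμ₂
        have p1 : (0:ℝ) < Real.sqrt gmin := Real.sqrt_pos.2 hgminpos
        have p3 : (0:ℝ) < fu⁻¹ := inv_pos.2 hfupos
        calc cl = Real.sqrt gmin * Kmin * fu⁻¹ * Kmin * Real.sqrt gmin := hcldef
        _ ≤ Real.sqrt (g₀ μ₁) * K μ₁ x * (f₀ x)⁻¹ * K x μ₂ * Real.sqrt (g₀ μ₂) :=
            aux_mul_le_mul5 p1.le hKminpos.le p3.le hKminpos.le p1.le h4 h1 h3 h2 h5
      · exact hPintegrand_int μ₁ hμ₁ μ₂ hμ₂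
    have hpos : 0 < cl * (volume S).toReal := by
      rw [hvolS_toReal]; exact mul_pos hclpos (by linarith)
    linarith
  have hP_aesm : ∀ μ₁ ∈ S, AEStronglyMeasurable (fun μ₂ => P μ₁ μ₂) (volume.restrict S) := by
    intro μ₁ hμ₁
    have : (fun μ₂ => P μ₁ μ₂) = fun μ₂ => ∫ x, (fun p : ℝ × ℝ =>
        Real.sqrt (g₀ μ₁) * K μ₁ p.2 * (f₀ p.2)⁻¹ * K p.2 p.1 * Real.sqrt (g₀ p.1)) (μ₂, x)
        ∂(volume.restrict S) := funext fun μ₂ => hP μ₁ μ₂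
    rw [this]
    have hsnd := Measure.quasiMeasurePreserving_snd
      (μ := volume.restrict S) (ν := volume.restrict S)
    have hfst := Measure.quasiMeasurePreserving_fst
      (μ := volume.restrict S) (ν := volume.restrict S)
    have haesm : AEStronglyMeasurable (fun p : ℝ × ℝ =>
        Real.sqrt (g₀ μ₁) * K μ₁ p.2 * (f₀ p.2)⁻¹ * K p.2 p.1 * Real.sqrt (g₀ p.1))
        ((volume.restrict S).prod (volume.restrict S)) :=
      ((((aestronglyMeasurable_const.mul
        ((((hKcont1 μ₁ hμ₁)).aestronglyMeasurable hSm).comp_quasiMeasurePreserving hsnd)).mul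
        (hf₀inv_aesm.comp_quasiMeasurePreserving hsnd)).mul hKpair_aesm').mul
        (hsqg_aesm.comp_quasiMeasurePreserving hfst))
    exact haesm.integral_prod_right'
  -- measurability and integrability of ζ_i = T_i √g₀
  have hζsq_int : ∀ i, (i = j ∨ i = j') → Integrable
      (fun μ => (T i μ * Real.sqrt (g₀ μ)) * (T i μ * Real.sqrt (g₀ μ)))
      (volume.restrict S) := by
    intro i hi
    by_contra hni
    have h0 := horth i i hi hi
    rw [integral_undef hni] at h0
    simp at h0
  have hζ_meas : ∀ i, (i = j ∨ i = j') → AEStronglyMeasurable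
      (fun μ => T i μ * Real.sqrt (g₀ μ)) (volume.restrict S) := by
    intro i hi
    by_cases hm : AEStronglyMeasurable (fun μ => T i μ * Real.sqrt (g₀ μ))
      (volume.restrict S)
    · exact hm
    have hzero : ∀ μ₁ ∈ S, T i μ₁ * Real.sqrt (g₀ μ₁) = 0 := by
      intro μ₁ hμ₁
      have h1 := heig i hi μ₁ hμ₁
      have hni : ¬ Integrable (fun μ₂ => P μ₁ μ₂ * (T i μ₂ * Real.sqrt (g₀ μ₂)))
          (volume.restrict S) := by
        intro hInt
        apply hm
        have heq : (fun μ => T i μ * Real.sqrt (g₀ μ)) =ᵐ[volume.restrict S]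
            fun μ₂ => (P μ₁ μ₂)⁻¹ * (P μ₁ μ₂ * (T i μ₂ * Real.sqrt (g₀ μ₂))) := by
          filter_upwards [ae_restrict_mem hSm] with μ₂ hμ₂
          rw [inv_mul_cancel_left₀ (ne_of_gt (hPpos μ₁ hμ₁ μ₂ hμ₂))]
        exact (((hP_aesm μ₁ hμ₁).aemeasurable.inv.aestronglyMeasurable).mul
          hInt.1).congr heq.symm
      rw [integral_undef hni] at h1
      have := hρpos i hi
      have h2 : ρ i * (T i μ₁ * Real.sqrt (g₀ μ₁)) = 0 := h1.symm
      rcases mul_eq_zero.1 h2 with h | h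
      · exact absurd h (ne_of_gt this)
      · exact h
    apply absurd _ hm
    have : (fun μ => T i μ * Real.sqrt (g₀ μ)) =ᵐ[volume.restrict S] fun _ => (0:ℝ) := by
      filter_upwards [ae_restrict_mem hSm] with μ hμ using hzero μ hμ
    exact aestronglyMeasurable_const.congr this.symm
  have hζ_int : ∀ i, (i = j ∨ i = j') → Integrable
      (fun μ => T i μ * Real.sqrt (g₀ μ)) (volume.restrict S) := by
    intro i hi
    apply Integrable.mono' ((integrable_const (1:ℝ)).add (hζsq_int i hi)) (hζ_meas i hi)
    filter_upwards with μ
    exact aux_abs_le_one_add_mul_self _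
  have hTg_eq : ∀ i, (fun μ => T i μ * g₀ μ) =ᵐ[volume.restrict S]
      fun μ => (T i μ * Real.sqrt (g₀ μ)) * Real.sqrt (g₀ μ) := by
    intro i
    filter_upwards [ae_restrict_mem hSm] with μ hμ
    rw [mul_assoc, Real.mul_self_sqrt (hg₀pos μ hμ).le]
  have hTg_aesm : ∀ i, (i = j ∨ i = j') → AEStronglyMeasurable
      (fun μ => T i μ * g₀ μ) (volume.restrict S) := by
    intro i hi
    exact ((hζ_meas i hi).mul hsqg_aesm).congr (hTg_eq i).symm
  have hTg_int : ∀ i, (i = j ∨ i = j') → Integrable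
      (fun μ => T i μ * g₀ μ) (volume.restrict S) := by
    intro i hi
    refine Integrable.congr ?_ (hTg_eq i).symm
    apply Integrable.mono'
      ((((integrable_const (1:ℝ)).add (hζsq_int i hi)).const_mul (Real.sqrt gmax)))
      ((hζ_meas i hi).mul hsqg_aesm)
    filter_upwards [ae_restrict_mem hSm] with μ hμ
    simp only [Pi.mul_apply, Pi.add_apply]
    rw [norm_mul]
    calc ‖T i μ * Real.sqrt (g₀ μ)‖ * ‖Real.sqrt (g₀ μ)‖
        ≤ (1 + (T i μ * Real.sqrt (g₀ μ)) * (T i μ * Real.sqrt (g₀ μ))) * Real.sqrt gmax := by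
          apply mul_le_mul (aux_abs_le_one_add_mul_self _)
          · rw [Real.norm_eq_abs, abs_of_nonneg (Real.sqrt_nonneg _)]
            exact hsqgmax μ hμ
          · exact norm_nonneg _
          · nlinarith [sq_nonneg (T i μ * Real.sqrt (g₀ μ))]
    _ = Real.sqrt gmax * (1 + (T i μ * Real.sqrt (g₀ μ)) * (T i μ * Real.sqrt (g₀ μ))) := by
          ring
  -- the functions A i x = ∫ K x μ (T i μ) g₀ μ dμ
  obtain ⟨A, hAdef⟩ : ∃ A : ℕ → ℝ → ℝ, ∀ i x,
      A i x = ∫ μ in S, K x μ * (T i μ * g₀ μ) :=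
    ⟨fun i x => ∫ μ in S, K x μ * (T i μ * g₀ μ), fun i x => rfl⟩
  have hKmpos : 0 < Km := hKminpos.trans_le (hKm' pK.1 hpK.1 pK.2 hpK.2)
  have hsnd := Measure.quasiMeasurePreserving_snd
    (μ := volume.restrict S) (ν := volume.restrict S)
  have hfst := Measure.quasiMeasurePreserving_fst
    (μ := volume.restrict S) (ν := volume.restrict S)
  have hKTg_int : ∀ i, (i = j ∨ i = j') → ∀ x ∈ S,
      Integrable (fun μ => K x μ * (T i μ * g₀ μ)) (volume.restrict S) := by
    intro i hi x hx
    apply Integrable.mono' (((hTg_int i hi).norm.const_mul Km))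
      (((hKcont1 x hx).aestronglyMeasurable hSm).mul (hTg_aesm i hi))
    filter_upwards [ae_restrict_mem hSm] with μ hμ
    show ‖K x μ * (T i μ * g₀ μ)‖ ≤ Km * ‖T i μ * g₀ μ‖
    rw [norm_mul]
    refine mul_le_mul_of_nonneg_right ?_ (norm_nonneg _)
    rw [Real.norm_eq_abs, abs_of_pos (hKpos x hx μ hμ)]
    exact hKm' x hx μ hμ
  have hUA : ∀ i x, U i x = A i x / f₀ x := by
    intro i x
    rw [hU i x, hAdef i x]
    simp only [mul_assoc]
  have hA_aesm : ∀ i, (i = j ∨ i = j') →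
      AEStronglyMeasurable (A i) (volume.restrict S) := by
    intro i hi
    have haesm : AEStronglyMeasurable (fun p : ℝ × ℝ => K p.1 p.2 * (T i p.2 * g₀ p.2))
        ((volume.restrict S).prod (volume.restrict S)) :=
      hKpair_aesm.mul ((hTg_aesm i hi).comp_quasiMeasurePreserving hsnd)
    have := haesm.integral_prod_right'
    have heq : A i = fun x => ∫ y, (fun p : ℝ × ℝ => K p.1 p.2 * (T i p.2 * g₀ p.2)) (x, y)
        ∂(volume.restrict S) := funext fun x => hAdef i x
    rw [heq]
    exact this
  have hA_bd : ∀ i, (i = j ∨ i = j') → ∀ x ∈ S,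
      |A i x| ≤ Km * ∫ μ in S, ‖T i μ * g₀ μ‖ := by
    intro i hi x hx
    rw [hAdef i x]
    calc |∫ μ in S, K x μ * (T i μ * g₀ μ)| ≤ ∫ μ in S, ‖K x μ * (T i μ * g₀ μ)‖ := by
          rw [← Real.norm_eq_abs]; exact norm_integral_le_integral_norm _
    _ ≤ ∫ μ in S, Km * ‖T i μ * g₀ μ‖ := by
          apply setIntegral_mono_on (hKTg_int i hi x hx).norm
            ((hTg_int i hi).norm.const_mul Km) hSm
          intro μ hμ
          rw [norm_mul]
          apply mul_le_mul_of_nonneg_right _ (norm_nonneg _)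
          rw [Real.norm_eq_abs, abs_of_pos (hKpos x hx μ hμ)]
          exact hKm' x hx μ hμ
    _ = Km * ∫ μ in S, ‖T i μ * g₀ μ‖ := integral_const_mul _ _
  have hCA_nonneg : ∀ i, 0 ≤ Km * ∫ μ in S, ‖T i μ * g₀ μ‖ := by
    intro i
    exact mul_nonneg hKmpos.le (integral_nonneg fun μ => norm_nonneg _)
  -- the key identity coming from the eigen-equation
  have hstar : ∀ i, (i = j ∨ i = j') → ∀ μ₁ ∈ S,
      ∫ x in S, K μ₁ x * ((f₀ x)⁻¹ * A i x) = ρ i * T i μ₁ := by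
    intro i hi μ₁ hμ₁
    have h1 := heig i hi μ₁ hμ₁
    have h2 : ∫ μ₂ in S, P μ₁ μ₂ * (T i μ₂ * Real.sqrt (g₀ μ₂))
        = ∫ μ₂ in S, ∫ x in S, Real.sqrt (g₀ μ₁) * K μ₁ x * (f₀ x)⁻¹ *
            (K x μ₂ * (T i μ₂ * g₀ μ₂)) := by
      apply setIntegral_congr_fun hSm
      intro μ₂ hμ₂
      dsimp only
      rw [hP μ₁ μ₂, ← integral_mul_const]
      apply setIntegral_congr_fun hSm
      intro x hx
      dsimp only
      have hs : Real.sqrt (g₀ μ₂) * Real.sqrt (g₀ μ₂) = g₀ μ₂ :=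
        Real.mul_self_sqrt (hg₀pos μ₂ hμ₂).le
      linear_combination (Real.sqrt (g₀ μ₁) * K μ₁ x * (f₀ x)⁻¹ * K x μ₂ * T i μ₂) * hs
    have hFint : Integrable (Function.uncurry fun μ₂ x =>
        Real.sqrt (g₀ μ₁) * K μ₁ x * (f₀ x)⁻¹ * (K x μ₂ * (T i μ₂ * g₀ μ₂)))
        ((volume.restrict S).prod (volume.restrict S)) := by
      have haesm : AEStronglyMeasurable (fun p : ℝ × ℝ =>
          Real.sqrt (g₀ μ₁) * K μ₁ p.2 * (f₀ p.2)⁻¹ * (K p.2 p.1 * (T i p.1 * g₀ p.1)))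
          ((volume.restrict S).prod (volume.restrict S)) :=
        ((aestronglyMeasurable_const.mul
          (((hKcont1 μ₁ hμ₁).aestronglyMeasurable hSm).comp_quasiMeasurePreserving hsnd)).mul
          (hf₀inv_aesm.comp_quasiMeasurePreserving hsnd)).mul
          (hKpair_aesm'.mul ((hTg_aesm i hi).comp_quasiMeasurePreserving hfst))
      apply Integrable.mono'
        ((((hTg_int i hi).norm.const_mul (Real.sqrt gmax * Km * fl⁻¹ * Km)).mul_prod
          (integrable_const (1:ℝ)))) haesm
      rw [Measure.prod_restrict]
      filter_upwards [ae_restrict_mem (hSm.prod hSm)] with p hp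
      obtain ⟨hp1, hp2⟩ := hp
      have e1 : ‖Real.sqrt (g₀ μ₁)‖ ≤ Real.sqrt gmax := by
        rw [Real.norm_eq_abs, abs_of_nonneg (Real.sqrt_nonneg _)]; exact hsqgmax μ₁ hμ₁
      have e2 : ‖K μ₁ p.2‖ ≤ Km := by
        rw [Real.norm_eq_abs, abs_of_pos (hKpos μ₁ hμ₁ p.2 hp2)]; exact hKm' μ₁ hμ₁ p.2 hp2
      have e3 : ‖(f₀ p.2)⁻¹‖ ≤ fl⁻¹ := by
        rw [Real.norm_eq_abs, abs_of_nonneg (inv_nonneg.2 (hf₀pos p.2 hp2).le)]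
        exact hf₀inv_ub p.2 hp2
      have e4 : ‖K p.2 p.1‖ ≤ Km := by
        rw [Real.norm_eq_abs, abs_of_pos (hKpos p.2 hp2 p.1 hp1)]; exact hKm' p.2 hp2 p.1 hp1
      calc ‖Real.sqrt (g₀ μ₁) * K μ₁ p.2 * (f₀ p.2)⁻¹ * (K p.2 p.1 * (T i p.1 * g₀ p.1))‖
          = ‖Real.sqrt (g₀ μ₁)‖ * ‖K μ₁ p.2‖ * ‖(f₀ p.2)⁻¹‖ * ‖K p.2 p.1‖ *
            ‖T i p.1 * g₀ p.1‖ := by simp only [norm_mul]; ring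
      _ ≤ Real.sqrt gmax * Km * fl⁻¹ * Km * ‖T i p.1 * g₀ p.1‖ :=
          aux_mul_le_mul5 (norm_nonneg _) (norm_nonneg _) (norm_nonneg _) (norm_nonneg _)
            (norm_nonneg _) e1 e2 e3 e4 le_rfl
      _ = Real.sqrt gmax * Km * fl⁻¹ * Km * ‖T i p.1 * g₀ p.1‖ * 1 := by ring
    have h3 := integral_integral_swap hFint
    have h4 : ∫ x in S, ∫ μ₂ in S, Real.sqrt (g₀ μ₁) * K μ₁ x * (f₀ x)⁻¹ *
        (K x μ₂ * (T i μ₂ * g₀ μ₂))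
        = Real.sqrt (g₀ μ₁) * ∫ x in S, K μ₁ x * ((f₀ x)⁻¹ * A i x) := by
      rw [← integral_const_mul]
      apply setIntegral_congr_fun hSm
      intro x hx
      dsimp only
      calc ∫ μ₂ in S, Real.sqrt (g₀ μ₁) * K μ₁ x * (f₀ x)⁻¹ * (K x μ₂ * (T i μ₂ * g₀ μ₂))
          = (Real.sqrt (g₀ μ₁) * K μ₁ x * (f₀ x)⁻¹) *
            ∫ μ₂ in S, K x μ₂ * (T i μ₂ * g₀ μ₂) := by
            rw [← integral_const_mul]
      _ = Real.sqrt (g₀ μ₁) * (K μ₁ x * ((f₀ x)⁻¹ * A i x)) := by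
            rw [← hAdef i x]; ring
    have h5 : Real.sqrt (g₀ μ₁) * (∫ x in S, K μ₁ x * ((f₀ x)⁻¹ * A i x))
        = Real.sqrt (g₀ μ₁) * (ρ i * T i μ₁) := by
      rw [← h4, ← h3, ← h2, h1]; ring
    exact mul_left_cancel₀ (ne_of_gt (hsqgpos μ₁ hμ₁)) h5
  -- final computation
  have step1 : ∫ x in S, U j x * U j' x * f₀ x
      = ∫ x in S, A j x * ((f₀ x)⁻¹ * A j' x) := by
    apply setIntegral_congr_fun hSm
    intro x hx
    dsimp only
    rw [hUA j x, hUA j' x]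
    field_simp [ne_of_gt (hf₀pos x hx)]
  have step2 : ∫ x in S, A j x * ((f₀ x)⁻¹ * A j' x)
      = ∫ x in S, ∫ μ in S, (K x μ * (T j μ * g₀ μ)) * ((f₀ x)⁻¹ * A j' x) := by
    apply setIntegral_congr_fun hSm
    intro x hx
    dsimp only
    rw [hAdef j x, ← integral_mul_const]
  have hFint2 : Integrable (Function.uncurry fun x μ =>
      (K x μ * (T j μ * g₀ μ)) * ((f₀ x)⁻¹ * A j' x))
      ((volume.restrict S).prod (volume.restrict S)) := by
    have haesm : AEStronglyMeasurable (fun p : ℝ × ℝ =>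
        (K p.1 p.2 * (T j p.2 * g₀ p.2)) * ((f₀ p.1)⁻¹ * A j' p.1))
        ((volume.restrict S).prod (volume.restrict S)) :=
      (hKpair_aesm.mul ((hTg_aesm j (Or.inl rfl)).comp_quasiMeasurePreserving hsnd)).mul
        ((hf₀inv_aesm.comp_quasiMeasurePreserving hfst).mul
          ((hA_aesm j' (Or.inr rfl)).comp_quasiMeasurePreserving hfst))
    apply Integrable.mono'
      ((integrable_const (1:ℝ)).mul_prod ((hTg_int j (Or.inl rfl)).norm.const_mul
        (Km * (fl⁻¹ * (Km * ∫ μ in S, ‖T j' μ * g₀ μ‖))))) haesm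
    rw [Measure.prod_restrict]
    filter_upwards [ae_restrict_mem (hSm.prod hSm)] with p hp
    obtain ⟨hp1, hp2⟩ := hp
    have e1 : ‖K p.1 p.2‖ ≤ Km := by
      rw [Real.norm_eq_abs, abs_of_pos (hKpos p.1 hp1 p.2 hp2)]; exact hKm' p.1 hp1 p.2 hp2
    have e3 : ‖(f₀ p.1)⁻¹‖ ≤ fl⁻¹ := by
      rw [Real.norm_eq_abs, abs_of_nonneg (inv_nonneg.2 (hf₀pos p.1 hp1).le)]
      exact hf₀inv_ub p.1 hp1
    have e4 : ‖A j' p.1‖ ≤ Km * ∫ μ in S, ‖T j' μ * g₀ μ‖ := by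
      rw [Real.norm_eq_abs]; exact hA_bd j' (Or.inr rfl) p.1 hp1
    calc ‖(K p.1 p.2 * (T j p.2 * g₀ p.2)) * ((f₀ p.1)⁻¹ * A j' p.1)‖
        = ‖K p.1 p.2‖ * ‖T j p.2 * g₀ p.2‖ * ‖(f₀ p.1)⁻¹‖ * ‖A j' p.1‖ := by
          simp only [norm_mul]; ring
    _ ≤ Km * ‖T j p.2 * g₀ p.2‖ * fl⁻¹ * (Km * ∫ μ in S, ‖T j' μ * g₀ μ‖) :=
        aux_mul_le_mul4 (norm_nonneg _) (norm_nonneg _) (norm_nonneg _) (norm_nonneg _)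
          e1 le_rfl e3 e4
    _ = 1 * (Km * (fl⁻¹ * (Km * ∫ μ in S, ‖T j' μ * g₀ μ‖)) * ‖T j p.2 * g₀ p.2‖) := by
          ring
  have step3 := integral_integral_swap hFint2
  have step4 : ∫ μ in S, ∫ x in S, (K x μ * (T j μ * g₀ μ)) * ((f₀ x)⁻¹ * A j' x)
      = ∫ μ in S, (T j μ * g₀ μ) * (ρ j' * T j' μ) := by
    apply setIntegral_congr_fun hSm
    intro μ hμ
    dsimp only
    calc ∫ x in S, (K x μ * (T j μ * g₀ μ)) * ((f₀ x)⁻¹ * A j' x)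
        = ∫ x in S, (T j μ * g₀ μ) * (K μ x * ((f₀ x)⁻¹ * A j' x)) := by
          apply setIntegral_congr_fun hSm
          intro x hx
          dsimp only
          rw [hKsymm x μ]; ring
    _ = (T j μ * g₀ μ) * ∫ x in S, K μ x * ((f₀ x)⁻¹ * A j' x) := by
          rw [← integral_const_mul]
    _ = (T j μ * g₀ μ) * (ρ j' * T j' μ) := by
          rw [hstar j' (Or.inr rfl) μ hμ]
  have step5 : ∫ μ in S, (T j μ * g₀ μ) * (ρ j' * T j' μ)
      = ρ j' * ∫ μ in S, (T j μ * Real.sqrt (g₀ μ)) * (T j' μ * Real.sqrt (g₀ μ)) := by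
    rw [← integral_const_mul]
    apply setIntegral_congr_fun hSm
    intro μ hμ
    dsimp only
    have hs : Real.sqrt (g₀ μ) * Real.sqrt (g₀ μ) = g₀ μ :=
      Real.mul_self_sqrt (hg₀pos μ hμ).le
    linear_combination (-(ρ j' * T j μ * T j' μ)) * hs
  rw [step1, step2, step3, step4, step5, horth j j' (Or.inl rfl) (Or.inr rfl)]
  by_cases h : j = j' <;> simp [h]
end
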